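/- arXiv:2508.14981 — 5 statements merged into one kernel-verified Lean document; each statement's English description precedes it below -/
import Mathlib

section
/- Let (E, J, M) be a cartesian double factorization system on a topos C. Let m∘j∘e be the (E, J, M)-factorization of the subobject classifier true : 1 → Ω, and set k = char(m). Then k : Ω → Ω is a Lawvere–Tierney topology on C; moreover M equals the class of k-closed monomorphisms, J·E equals DnsMono_k·Epi, and (E, J, M) is a Bousfield localization of the dfs (Epi, DnsMono_k, ClsMono_k), where DnsMono_k and ClsMono_k denote the classes of k-dense and k-closed monomorphisms. -/
open CategoryTheory CategoryTheory.Limits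

universe v u v₂ u₂

namespace DFS

variable {C : Type u} [Category.{v} C]

/-- `f` is (left) orthogonal to `g`: every commutative square from `f` to `g`
admits a unique diagonal filler. -/
def Orth {A B X Y : C} (f : A ⟶ B) (g : X ⟶ Y) : Prop :=
  ∀ (u : A ⟶ X) (v : B ⟶ Y), u ≫ g = f ≫ v → ∃! h : B ⟶ X, f ≫ h = u ∧ h ≫ g = v

/-- Mutual orthogonality of two classes of morphisms. -/
def ClassOrth (L R : MorphismProperty C) : Prop :=
  ∀ ⦃A B X Y : C⦄ (f : A ⟶ B) (g : X ⟶ Y), L f → R g → Orth f g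

/-- The class `R·L` of composites `e ≫ m` with `e ∈ L` and `m ∈ R`. -/
def Comp (R L : MorphismProperty C) : MorphismProperty C :=
  fun X Y f => ∃ (Z : C) (e : X ⟶ Z) (m : Z ⟶ Y), L e ∧ R m ∧ e ≫ m = f

/-- An object `X` is `L`-local if precomposition with every member of `L` is a
bijection of hom-sets into `X`. -/
def IsLocal (L : MorphismProperty C) (X : C) : Prop :=
  ∀ ⦃A B : C⦄ (m : A ⟶ B), L m → Function.Bijective (fun g : B ⟶ X => m ≫ g)

/-- An object `X` is `L`-separating if precomposition with every member of `L` is an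
injection of hom-sets into `X`. -/
def IsSeparating (L : MorphismProperty C) (X : C) : Prop :=
  ∀ ⦃A B : C⦄ (m : A ⟶ B), L m → Function.Injective (fun g : B ⟶ X => m ≫ g)

/-- A double (orthogonal) factorization system. -/
structure IsDFS (E J M : MorphismProperty C) : Prop where
  postcomp_iso_E : ∀ ⦃A B B' : C⦄ (e : A ⟶ B) (i : B ⟶ B'), IsIso i → E e → E (e ≫ i)
  comp_iso_J : ∀ ⦃A' A B B' : C⦄ (i : A' ⟶ A) (j : A ⟶ B) (i' : B ⟶ B'),
      IsIso i → IsIso i' → J j → J (i ≫ j ≫ i')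
  precomp_iso_M : ∀ ⦃A' A B : C⦄ (i : A' ⟶ A) (m : A ⟶ B), IsIso i → M m → M (i ≫ m)
  fac : ∀ ⦃X Y : C⦄ (f : X ⟶ Y), ∃ (A B : C) (e : X ⟶ A) (j : A ⟶ B) (m : B ⟶ Y),
      E e ∧ J j ∧ M m ∧ e ≫ j ≫ m = f
  lift : ∀ ⦃A B B'' D D' F' : C⦄ (e : A ⟶ B) (j : B ⟶ B'') (j' : D ⟶ D') (m : D' ⟶ F')
      (u : A ⟶ D) (v : B'' ⟶ F'), E e → J j → J j' → M m →
      e ≫ j ≫ v = u ≫ j' ≫ m →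
      ∃! st : (B ⟶ D) × (B'' ⟶ D'),
        e ≫ st.1 = u ∧ st.1 ≫ j' = j ≫ st.2 ∧ st.2 ≫ m = v

/-- An (orthogonal) factorization system. -/
structure IsFS (L R : MorphismProperty C) : Prop where
  fac : ∀ ⦃X Y : C⦄ (f : X ⟶ Y), ∃ (Z : C) (e : X ⟶ Z) (m : Z ⟶ Y), L e ∧ R m ∧ e ≫ m = f
  left_iff : ∀ ⦃A B : C⦄ (f : A ⟶ B), L f ↔ ∀ ⦃X Y : C⦄ (g : X ⟶ Y), R g → Orth f g
  right_iff : ∀ ⦃X Y : C⦄ (g : X ⟶ Y), R g ↔ ∀ ⦃A B : C⦄ (f : A ⟶ B), L f → Orth f g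

/-- Stability of a class of morphisms under pullback. -/
def StableUnderPB (P : MorphismProperty C) : Prop :=
  ∀ ⦃A B A' B' : C⦄ (f : A ⟶ B) (g : B' ⟶ B) (f' : A' ⟶ B') (h : A' ⟶ A),
    IsPullback h f' f g → P f → P f'

/-- A left Quillen functor between categories equipped with dfs's: it maps
trivial cofibrations to trivial cofibrations and cofibrations to cofibrations. -/
def LeftQuillen {D : Type u₂} [Category.{v₂} D]
    (EC JC : MorphismProperty C) (ED JD : MorphismProperty D) (F : C ⥤ D) : Prop :=
  (∀ ⦃A B : C⦄ (f : A ⟶ B), EC f → ED (F.map f)) ∧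
  (∀ ⦃A B : C⦄ (f : A ⟶ B), Comp JC EC f → Comp JD ED (F.map f))

end DFS
namespace DFS

variable {C : Type u} [Category.{v} C]

section Topos

variable [HasTerminal C]

/-- `c : B ⟶ Ω` classifies the morphism `m : A ⟶ B` (relative to the truth arrow
`tr : ⊤ ⟶ Ω`) if the evident square is a pullback. -/
def Classifies (Ω : C) (tr : ⊤_ C ⟶ Ω) {A B : C} (m : A ⟶ B) (c : B ⟶ Ω) : Prop :=
  IsPullback (terminal.from A) m tr c

/-- `(Ω, tr)` is a subobject classifier: every monomorphism has a unique
classifying morphism. -/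
def IsClassifier (Ω : C) (tr : ⊤_ C ⟶ Ω) : Prop :=
  ∀ ⦃A B : C⦄ (m : A ⟶ B), Mono m → ∃! c : B ⟶ Ω, Classifies Ω tr m c

/-- `k : Ω ⟶ Ω` is a Lawvere–Tierney topology: `k ∘ true = true`, `k ∘ k = k` and
`k ∘ ∧ = ∧ ∘ (k × k)`, where `∧ = char(true × true)`. -/
def IsLT [HasBinaryProducts C] (Ω : C) (tr : ⊤_ C ⟶ Ω) (k : Ω ⟶ Ω) : Prop :=
  tr ≫ k = tr ∧ k ≫ k = k ∧
    ∀ meet : Ω ⨯ Ω ⟶ Ω, Classifies Ω tr (prod.lift tr tr) meet →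
      meet ≫ k = prod.map k k ≫ meet

/-- `m` is a `k`-dense monomorphism: its characteristic morphism `c` satisfies
`k ∘ c = true ∘ !`. -/
def IsDense (Ω : C) (tr : ⊤_ C ⟶ Ω) (k : Ω ⟶ Ω) {A B : C} (m : A ⟶ B) : Prop :=
  ∃ c : B ⟶ Ω, Classifies Ω tr m c ∧ c ≫ k = terminal.from B ≫ tr

/-- `m` is a `k`-closed monomorphism: its characteristic morphism `c` satisfies
`k ∘ c = c`. -/
def IsClosed (Ω : C) (tr : ⊤_ C ⟶ Ω) (k : Ω ⟶ Ω) {A B : C} (m : A ⟶ B) : Prop :=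
  ∃ c : B ⟶ Ω, Classifies Ω tr m c ∧ c ≫ k = c

/-- The class of `k`-dense monomorphisms. -/
def denseMonos (Ω : C) (tr : ⊤_ C ⟶ Ω) (k : Ω ⟶ Ω) : MorphismProperty C :=
  fun _ _ m => Mono m ∧ IsDense Ω tr k m

/-- The class of `k`-closed monomorphisms. -/
def closedMonos (Ω : C) (tr : ⊤_ C ⟶ Ω) (k : Ω ⟶ Ω) : MorphismProperty C :=
  fun _ _ m => Mono m ∧ IsClosed Ω tr k m

/-- The class of epimorphisms. -/
def epis : MorphismProperty C := fun _ _ f => Epi f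

/-- `X` is a `k`-sheaf: every hom into `X` extends uniquely along `k`-dense
monomorphisms. -/
def IsSheaf (Ω : C) (tr : ⊤_ C ⟶ Ω) (k : Ω ⟶ Ω) (X : C) : Prop :=
  ∀ ⦃A B : C⦄ (m : A ⟶ B), Mono m → IsDense Ω tr k m →
    Function.Bijective (fun g : B ⟶ X => m ≫ g)

/-- `X` is a `k`-separated object: every hom into `X` extends at most in one way along
`k`-dense monomorphisms. -/
def IsSepObj (Ω : C) (tr : ⊤_ C ⟶ Ω) (k : Ω ⟶ Ω) (X : C) : Prop :=
  ∀ ⦃A B : C⦄ (m : A ⟶ B), Mono m → IsDense Ω tr k m →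
    Function.Injective (fun g : B ⟶ X => m ≫ g)

/-- `n` is the `k`-closure of the monomorphism `m`: `n` is classified by
`k ∘ char m`. -/
def IsClosureOf (Ω : C) (tr : ⊤_ C ⟶ Ω) (k : Ω ⟶ Ω) {A A' B : C}
    (m : A ⟶ B) (n : A' ⟶ B) : Prop :=
  ∃ c : B ⟶ Ω, Classifies Ω tr m c ∧ Classifies Ω tr n (c ≫ k)

/-- A dfs `(E, J, M)` is cartesian: `E` and `J·E` are stable under pullback and
every morphism of `M·J` is a monomorphism. -/
def IsCartesian (E J M : MorphismProperty C) : Prop :=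
  StableUnderPB E ∧ StableUnderPB (Comp J E) ∧
    ∀ ⦃A B : C⦄ (f : A ⟶ B), Comp M J f → Mono f

end Topos

end DFS

namespace S12

open DFS

variable {C : Type u} [Category.{v} C]

section Basics

variable [HasTerminal C] {Ω : C} {tr : ⊤_ C ⟶ Ω}

/-- The constantly-true morphism on `Z`. -/
noncomputable def tru (tr : ⊤_ C ⟶ Ω) (Z : C) : Z ⟶ Ω := terminal.from Z ≫ tr

lemma from_terminal_mono {X : C} (g : ⊤_ C ⟶ X) : Mono g := by
  have : IsSplitMono g := IsSplitMono.mk' ⟨terminal.from X, terminal.hom_ext _ _⟩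
  exact IsSplitMono.mono g

/-- Helper: build a pullback square over the terminal object. -/
lemma isPullback_to_terminal {P Y Z : C} (snd : P ⟶ Y) (f : ⊤_ C ⟶ Z) (g : Y ⟶ Z)
    (hsnd : Mono snd) (w : terminal.from P ≫ f = snd ≫ g)
    (lift : ∀ {T : C} (b : T ⟶ Y), terminal.from T ≫ f = b ≫ g → (T ⟶ P))
    (hlift : ∀ {T : C} (b : T ⟶ Y) (hb : terminal.from T ≫ f = b ≫ g), lift b hb ≫ snd = b) :
    IsPullback (terminal.from P) snd f g := by
  refine IsPullback.of_isLimit' ⟨w⟩ ?_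
  refine PullbackCone.IsLimit.mk w (fun s => lift s.snd ?_) (fun s => terminal.hom_ext _ _)
    (fun s => hlift s.snd _) (fun s t h1 h2 => ?_)
  · rw [← s.condition]; congr 1; exact terminal.hom_ext _ _
  · have := hlift s.snd (by rw [← s.condition]; congr 1; exact terminal.hom_ext _ _)
    apply hsnd.right_cancellation
    rw [h2, this]

lemma cls_id (X : C) : Classifies Ω tr (𝟙 X) (tru tr X) := by
  refine isPullback_to_terminal _ _ _ inferInstance ?_ (fun {T} b hb => b)
    (fun {T} b hb => Category.comp_id b)
  simp [tru]

lemma cls_iso {S X : C} (n : S ⟶ X) [IsIso n] : Classifies Ω tr n (tru tr X) := by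
  refine isPullback_to_terminal _ _ _ inferInstance ?_ (fun {T} b hb => b ≫ inv n)
    (fun {T} b hb => by simp) 
  rw [tru, ← Category.assoc]
  congr 1
  exact terminal.hom_ext _ _

/-- Uniqueness of classifying maps. -/
lemma cls_unique (hΩ : IsClassifier Ω tr) {S X : C} {n : S ⟶ X} (hn : Mono n)
    {c c' : X ⟶ Ω} (h1 : Classifies Ω tr n c) (h2 : Classifies Ω tr n c') : c = c' := by
  obtain ⟨c₀, -, hu⟩ := hΩ n hn
  rw [hu c h1, hu c' h2]

/-- Factorization through a classified subobject. -/
lemma factors_of_comp_eq_true {S X T : C} {n : S ⟶ X} {c : X ⟶ Ω} (hcl : Classifies Ω tr n c)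
    (g : T ⟶ X) (hg : g ≫ c = tru tr T) : ∃ h' : T ⟶ S, h' ≫ n = g := by
  refine ⟨hcl.lift (terminal.from T) g ?_, hcl.lift_snd _ _ _⟩
  rw [hg]; rfl

lemma comp_eq_true_of_factors {S X T : C} {n : S ⟶ X} {c : X ⟶ Ω} (hcl : Classifies Ω tr n c)
    {g : T ⟶ X} {h' : T ⟶ S} (hh : h' ≫ n = g) : g ≫ c = tru tr T := by
  rw [← hh, Category.assoc, ← hcl.w, ← Category.assoc, tru]
  congr 1
  exact terminal.hom_ext _ _

/-- Two monos with the same classifying map are isomorphic over the base. -/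
lemma iso_of_same_cls {S S' X : C} {n : S ⟶ X} {n' : S' ⟶ X} {c : X ⟶ Ω}
    (h1 : Classifies Ω tr n c) (h2 : Classifies Ω tr n' c) : ∃ i : S ≅ S', i.hom ≫ n' = n :=
  ⟨h1.isoIsPullback _ _ h2, h1.isoIsPullback_hom_snd _ _ h2⟩

/-- A topos is balanced. -/
lemma balanced_of_classifier (hΩ : IsClassifier Ω tr) {X Y : C} (f : X ⟶ Y)
    (hmono : Mono f) (hepi : Epi f) : IsIso f := by
  obtain ⟨c, hcl, -⟩ := hΩ f hmono
  have hc : c = tru tr Y := by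
    apply hepi.left_cancellation
    have h1 : f ≫ c = tru tr X := comp_eq_true_of_factors hcl (Category.id_comp f)
    rw [h1, tru, tru, ← Category.assoc]
    congr 1
    exact terminal.hom_ext _ _
  rw [hc] at hcl
  obtain ⟨i, hi⟩ := iso_of_same_cls hcl (cls_id Y)
  rw [Category.comp_id] at hi
  rw [← hi]
  infer_instance

end Basics

section DFSLemmas

variable {E J M : MorphismProperty C}

lemma id_fac_isos (h : IsDFS E J M) {X A' B' : C} {e' : X ⟶ A'} {j' : A' ⟶ B'} {m' : B' ⟶ X}
    (he : E e') (hj : J j') (hm : M m') (hfac : e' ≫ j' ≫ m' = 𝟙 X) :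
    IsIso e' ∧ IsIso j' ∧ IsIso m' := by
  obtain ⟨⟨s, t⟩, -, huniq⟩ := h.lift e' j' j' m' e' m' he hj hj hm rfl
  have h1 : ((𝟙 A', 𝟙 B') : (A' ⟶ A') × (B' ⟶ B')) = (s, t) := by
    apply huniq
    refine ⟨by simp, by simp, by simp⟩
  have h2 : ((j' ≫ m' ≫ e', m' ≫ e' ≫ j') : (A' ⟶ A') × (B' ⟶ B')) = (s, t) := by
    apply huniq
    refine ⟨?_, by simp, ?_⟩
    · rw [← Category.assoc, ← Category.assoc, Category.assoc e' j' m', hfac, Category.id_comp]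
    · rw [Category.assoc, Category.assoc, hfac, Category.comp_id]
  have h12 := h1.trans h2.symm
  have h3 : 𝟙 A' = j' ≫ m' ≫ e' := congrArg Prod.fst h12
  have h4 : 𝟙 B' = m' ≫ e' ≫ j' := congrArg Prod.snd h12
  refine ⟨⟨j' ≫ m', hfac, by rw [Category.assoc]; exact h3.symm⟩,
    ⟨m' ≫ e', h3.symm, by rw [Category.assoc]; exact h4.symm⟩,
    ⟨e' ≫ j', h4.symm, by rw [Category.assoc]; exact hfac⟩⟩

lemma iso_mem_E (h : IsDFS E J M) {X Y : C} (i : X ⟶ Y) (hi : IsIso i) : E i := by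
  obtain ⟨A', B', e', j', m', he, hj, hm, hfac⟩ := h.fac (𝟙 X)
  obtain ⟨he', -, -⟩ := id_fac_isos h he hj hm hfac
  have := h.postcomp_iso_E e' (inv e' ≫ i) (by infer_instance) he
  simpa using this

lemma iso_mem_J (h : IsDFS E J M) {X Y : C} (i : X ⟶ Y) (hi : IsIso i) : J i := by
  obtain ⟨A', B', e', j', m', he, hj, hm, hfac⟩ := h.fac (𝟙 X)
  obtain ⟨he', -, hm'⟩ := id_fac_isos h he hj hm hfac
  have hJ := h.comp_iso_J e' j' (m' ≫ i) he' (by infer_instance) hj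
  have heq : e' ≫ j' ≫ m' ≫ i = i := by
    rw [show e' ≫ j' ≫ m' ≫ i = (e' ≫ j' ≫ m') ≫ i by simp, hfac, Category.id_comp]
  rwa [heq] at hJ

lemma iso_mem_M (h : IsDFS E J M) {X Y : C} (i : X ⟶ Y) (hi : IsIso i) : M i := by
  obtain ⟨A', B', e', j', m', he, hj, hm, hfac⟩ := h.fac (𝟙 Y)
  obtain ⟨-, -, hm'⟩ := id_fac_isos h he hj hm hfac
  have := h.precomp_iso_M (i ≫ inv m') m' (by infer_instance) hm
  simpa using this

lemma M_mono (h : IsDFS E J M) (hc : IsCartesian E J M) {X Y : C} {g : X ⟶ Y} (hg : M g) :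
    Mono g :=
  hc.2.2 g ⟨X, 𝟙 X, g, iso_mem_J h _ (by infer_instance), hg, Category.id_comp g⟩

lemma J_mono (h : IsDFS E J M) (hc : IsCartesian E J M) {X Y : C} {g : X ⟶ Y} (hg : J g) :
    Mono g :=
  hc.2.2 g ⟨Y, g, 𝟙 Y, hg, iso_mem_M h _ (by infer_instance), Category.comp_id g⟩

lemma orth_E_JM (h : IsDFS E J M) {X Y D D' F' : C} {e' : X ⟶ Y} {j' : D ⟶ D'} {m' : D' ⟶ F'}
    (he : E e') (hj : J j') (hm : M m') : Orth e' (j' ≫ m') := by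
  intro u v huv
  obtain ⟨⟨s, t⟩, ⟨hs1, hs2, hs3⟩, huniq⟩ := h.lift e' (𝟙 Y) j' m' u v he
    (iso_mem_J h _ (by infer_instance)) hj hm (by rw [Category.id_comp, ← huv])
  refine ⟨s, ⟨hs1, ?_⟩, fun y hy => ?_⟩
  · rw [← Category.assoc, hs2, Category.id_comp, hs3]
  · have := huniq (y, y ≫ j') ⟨hy.1, by simp, by rw [Category.assoc]; exact hy.2⟩
    exact congrArg Prod.fst this

lemma orth_EJ_M (h : IsDFS E J M) {X Y Z D D' : C} {e' : X ⟶ Y} {j' : Y ⟶ Z} {g : D ⟶ D'}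
    (he : E e') (hj : J j') (hg : M g) : Orth (e' ≫ j') g := by
  intro u v huv
  obtain ⟨⟨s, t⟩, ⟨hs1, hs2, hs3⟩, huniq⟩ := h.lift e' j' (𝟙 D) g u v he hj
    (iso_mem_J h _ (by infer_instance)) hg
    (by rw [← Category.assoc, ← huv, Category.id_comp])
  rw [Category.comp_id] at hs2
  refine ⟨t, ⟨by rw [Category.assoc, ← hs2, hs1], hs3⟩, fun y hy => ?_⟩
  have := huniq (j' ≫ y, y) ⟨by rw [← Category.assoc]; exact hy.1, by simp, hy.2⟩
  exact congrArg Prod.snd this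

lemma orth_compJE_M (h : IsDFS E J M) {X Y D D' : C} {f : X ⟶ Y} {g : D ⟶ D'}
    (hf : Comp J E f) (hg : M g) : Orth f g := by
  obtain ⟨Z, e', j', he, hj, rfl⟩ := hf
  exact orth_EJ_M h he hj hg

lemma orth_E_M (h : IsDFS E J M) {X Y D D' : C} {e' : X ⟶ Y} {g : D ⟶ D'}
    (he : E e') (hg : M g) : Orth e' g := by
  have := orth_E_JM h he (iso_mem_J h (𝟙 D) (by infer_instance)) hg
  rwa [Category.id_comp] at this

lemma orth_comp {X Y Z D D' : C} {f : X ⟶ Y} {f' : Y ⟶ Z} {g : D ⟶ D'}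
    (h1 : Orth f g) (h2 : Orth f' g) : Orth (f ≫ f') g := by
  intro u v huv
  obtain ⟨a, ⟨ha1, ha2⟩, hau⟩ := h1 u (f' ≫ v) (by rw [huv]; simp)
  obtain ⟨b, ⟨hb1, hb2⟩, hbu⟩ := h2 a v (by rw [ha2])
  refine ⟨b, ⟨by rw [Category.assoc, hb1, ha1], hb2⟩, fun y hy => ?_⟩
  have hfy : f' ≫ y = a := hau _ ⟨by rw [← Category.assoc]; exact hy.1, by
    rw [Category.assoc, hy.2]⟩
  exact hbu y ⟨hfy, hy.2⟩

lemma mem_M_of_orth (h : IsDFS E J M) (hc : IsCartesian E J M) {X Y : C} (g : X ⟶ Y)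
    (hg : ∀ ⦃A' B' : C⦄ (f : A' ⟶ B'), Comp J E f → Orth f g) : M g := by
  obtain ⟨A', B', e₁, j₁, m₁, he, hj, hm, hfac⟩ := h.fac g
  have hm₁mono : Mono m₁ := M_mono h hc hm
  obtain ⟨w, ⟨hw1, hw2⟩, -⟩ := hg (e₁ ≫ j₁) ⟨A', e₁, j₁, he, hj, rfl⟩ (𝟙 X) m₁
    (by rw [Category.id_comp, Category.assoc, hfac])
  have hwiso : IsIso (e₁ ≫ j₁) := by
    refine ⟨w, hw1, ?_⟩
    have hcalc : (w ≫ (e₁ ≫ j₁)) ≫ m₁ = 𝟙 B' ≫ m₁ := by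
      rw [Category.assoc, Category.assoc, hfac, hw2, Category.id_comp]
    exact hm₁mono.right_cancellation _ _ hcalc
  have := h.precomp_iso_M (e₁ ≫ j₁) m₁ hwiso hm
  rwa [Category.assoc, hfac] at this

lemma mem_compJE_of_orth (h : IsDFS E J M) (hc : IsCartesian E J M) {X Y : C} (f : X ⟶ Y)
    (hf : ∀ ⦃D D' : C⦄ (g : D ⟶ D'), M g → Orth f g) : Comp J E f := by
  obtain ⟨A', B', e₁, j₁, m₁, he, hj, hm, hfac⟩ := h.fac f
  have hm₁mono : Mono m₁ := M_mono h hc hm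
  obtain ⟨w, ⟨hw1, hw2⟩, -⟩ := hf m₁ hm (e₁ ≫ j₁) (𝟙 Y)
    (by rw [Category.comp_id, Category.assoc, hfac])
  have hmiso : IsIso m₁ := by
    refine ⟨w, ?_, hw2⟩
    have hcalc : (m₁ ≫ w) ≫ m₁ = 𝟙 B' ≫ m₁ := by
      rw [Category.assoc, hw2, Category.comp_id, Category.id_comp]
    exact hm₁mono.right_cancellation _ _ hcalc
  refine ⟨A', e₁, j₁ ≫ m₁, he, ?_, hfac⟩
  have := h.comp_iso_J (𝟙 A') j₁ m₁ (by infer_instance) hmiso hj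
  simpa using this

end DFSLemmas


section DFSLemmas2

variable {E J M : MorphismProperty C}

lemma compJE_of_E (h : IsDFS E J M) {X Y : C} {f : X ⟶ Y} (hf : E f) : Comp J E f :=
  ⟨Y, f, 𝟙 Y, hf, iso_mem_J h _ (by infer_instance), Category.comp_id f⟩

lemma compJE_of_J (h : IsDFS E J M) {X Y : C} {f : X ⟶ Y} (hf : J f) : Comp J E f :=
  ⟨X, 𝟙 X, f, iso_mem_E h _ (by infer_instance), hf, Category.id_comp f⟩

lemma compJE_comp (h : IsDFS E J M) (hc : IsCartesian E J M) {X Y Z : C} {f : X ⟶ Y}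
    {f' : Y ⟶ Z} (hf : Comp J E f) (hf' : Comp J E f') : Comp J E (f ≫ f') := by
  refine mem_compJE_of_orth h hc _ (fun D D' g hg => ?_)
  exact orth_comp (orth_compJE_M h hf hg) (orth_compJE_M h hf' hg)

lemma orth_pullback {X Y Y' P : C} {g : X ⟶ Y} {q : Y' ⟶ Y} {pfst : P ⟶ X} {psnd : P ⟶ Y'}
    (sq : IsPullback pfst psnd g q) {A' B' : C} {f : A' ⟶ B'} (hf : Orth f g) : Orth f psnd := by
  intro u v huv
  obtain ⟨h₁, ⟨hh1, hh2⟩, hu⟩ := hf (u ≫ pfst) (v ≫ q)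
    (by rw [Category.assoc, sq.w, ← Category.assoc, huv, Category.assoc])
  refine ⟨sq.lift h₁ v hh2, ⟨?_, sq.lift_snd _ _ _⟩, fun y hy => ?_⟩
  · apply sq.hom_ext
    · rw [Category.assoc, sq.lift_fst, hh1]
    · rw [Category.assoc, sq.lift_snd, huv]
  · have hyfst : y ≫ pfst = h₁ := by
      refine hu _ ⟨by rw [← Category.assoc, hy.1], ?_⟩
      rw [Category.assoc, sq.w, ← Category.assoc, hy.2]
    apply sq.hom_ext
    · rw [sq.lift_fst, hyfst]
    · rw [sq.lift_snd, hy.2]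

lemma M_pb_stable (h : IsDFS E J M) (hc : IsCartesian E J M) : StableUnderPB M := by
  intro A' B' A'' B'' f g f' hpb hsq hf
  refine mem_M_of_orth h hc _ (fun D D' w hw => ?_)
  exact orth_pullback hsq (orth_compJE_M h hw hf)

end DFSLemmas2

section Closure

variable [HasFiniteLimits C] {Ω : C} {tr : ⊤_ C ⟶ Ω} {E J M : MorphismProperty C}
variable {A B : C} {e : ⊤_ C ⟶ A} {j : A ⟶ B} {m : B ⟶ Ω} {k : Ω ⟶ Ω}

/-- A pullback square witnessing that `t` is the pullback of the mono `m` along `t ≫ m`. -/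
lemma isPullback_id_of_mono_factor {P Y Z : C} (mm : Y ⟶ Z) (hm : Mono mm) (t : P ⟶ Y) :
    IsPullback t (𝟙 P) mm (t ≫ mm) := by
  refine IsPullback.of_isLimit' ⟨by simp⟩ ?_
  refine PullbackCone.IsLimit.mk _ (fun s => s.snd) (fun s => ?_) (fun s => Category.comp_id _)
    (fun s w h1 h2 => by simpa using h2)
  apply hm.right_cancellation
  rw [Category.assoc, ← s.condition]

lemma epi_mem_E (h : IsDFS E J M) (hc : IsCartesian E J M) (hΩ : IsClassifier Ω tr)
    {X Y : C} (f : X ⟶ Y) (hf : Epi f) : E f := by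
  obtain ⟨A', B', e₁, j₁, m₁, he, hj, hm, hfac⟩ := h.fac f
  have hjm_mono : Mono (j₁ ≫ m₁) := hc.2.2 _ ⟨B', j₁, m₁, hj, hm, rfl⟩
  have hjm_epi : Epi (j₁ ≫ m₁) := by
    have : Epi (e₁ ≫ j₁ ≫ m₁) := hfac ▸ hf
    exact @epi_of_epi _ _ _ _ _ e₁ (j₁ ≫ m₁) this
  have hiso := balanced_of_classifier hΩ _ hjm_mono hjm_epi
  have := h.postcomp_iso_E e₁ (j₁ ≫ m₁) hiso he
  rwa [hfac] at this

/-- Construction of the closure of a mono `n` classified by `c`: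
it is an `M`-subobject containing `n` via a `J·E`-map, classified by `c ≫ k`. -/
lemma closure_exists (h : IsDFS E J M) (hc : IsCartesian E J M)
    (he : E e) (hj : J j) (hm : M m) (hfac : e ≫ j ≫ m = tr)
    (hk : Classifies Ω tr m k)
    {S X : C} {n : S ⟶ X} (hn : Mono n) {c : X ⟶ Ω} (hcl : Classifies Ω tr n c) :
    ∃ (S' : C) (u : S ⟶ S') (nb : S' ⟶ X), u ≫ nb = n ∧ Comp J E u ∧ M nb ∧ Mono nb ∧
      Classifies Ω tr nb (c ≫ k) := by
  haveI hmono_m : Mono m := M_mono h hc hm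
  have hpb : IsPullback (pullback.fst c m) (pullback.snd c m) c m := IsPullback.of_hasPullback c m
  set S' := pullback c m
  set nb : S' ⟶ X := pullback.fst c m with hnb
  set q : S' ⟶ B := pullback.snd c m with hq
  have sq2 : IsPullback q nb m c := hpb.flip
  have hMnb : M nb := M_pb_stable h hc m c nb q sq2 hm
  have hclnb : Classifies Ω tr nb (c ≫ k) := by
    have := sq2.paste_horiz hk
    rwa [show q ≫ terminal.from B = terminal.from S' from terminal.hom_ext _ _] at this
  have hw : n ≫ c = (terminal.from S ≫ (e ≫ j)) ≫ m := by
    rw [← hcl.w, Category.assoc, Category.assoc, hfac]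
  refine ⟨S', hpb.lift n (terminal.from S ≫ (e ≫ j)) hw, nb, hpb.lift_fst _ _ _, ?_, hMnb,
    pullback.fst_of_mono, hclnb⟩
  set u := hpb.lift n (terminal.from S ≫ (e ≫ j)) hw
  have sq1 : IsPullback (terminal.from S) u (e ≫ j) q := by
    refine IsPullback.of_bot ?_ (hpb.lift_snd _ _ _).symm sq2
    have : u ≫ nb = n := hpb.lift_fst _ _ _
    rw [this, show (e ≫ j) ≫ m = tr by rw [Category.assoc, hfac]]
    exact hcl
  exact hc.2.1 (e ≫ j) q u (terminal.from S) sq1 ⟨A, e, j, he, hj, rfl⟩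

/-- Transport of classifying squares along isomorphisms. -/
lemma cls_precomp_iso {S S' X : C} (i : S ⟶ S') (hi : IsIso i) {nb : S' ⟶ X} {c : X ⟶ Ω}
    (hcl : Classifies Ω tr nb c) : Classifies Ω tr (i ≫ nb) c := by
  haveI := hi
  have s : IsPullback (terminal.from S) i (𝟙 (⊤_ C)) (terminal.from S') :=
    IsPullback.of_vert_isIso ⟨terminal.hom_ext _ _⟩
  have := s.paste_vert hcl
  rwa [Category.id_comp] at this

/-- The classifying map of an `M`-mono is `k`-fixed. -/
lemma M_mem_closed (h : IsDFS E J M) (hc : IsCartesian E J M) (hΩ : IsClassifier Ω tr)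
    (he : E e) (hj : J j) (hm : M m) (hfac : e ≫ j ≫ m = tr)
    (hk : Classifies Ω tr m k)
    {S X : C} {n : S ⟶ X} (hM : M n) {c : X ⟶ Ω} (hcl : Classifies Ω tr n c) :
    c ≫ k = c := by
  have hn : Mono n := M_mono h hc hM
  obtain ⟨S', u, nb, hun, hu, hMnb, hnbmono, hclnb⟩ :=
    closure_exists h hc he hj hm hfac hk hn hcl
  obtain ⟨hq, ⟨hq1, hq2⟩, -⟩ := orth_compJE_M h hu hM (𝟙 S) nb
    (by rw [Category.id_comp, hun])
  have huiso : IsIso u := by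
    refine ⟨hq, hq1, ?_⟩
    have : (hq ≫ u) ≫ nb = 𝟙 S' ≫ nb := by
      rw [Category.assoc, hun, hq2, Category.id_comp]
    exact hnbmono.right_cancellation _ _ this
  have : Classifies Ω tr n (c ≫ k) := by
    have := cls_precomp_iso u huiso hclnb
    rwa [hun] at this
  exact cls_unique hΩ hn this hcl

lemma closed_mem_M (h : IsDFS E J M) (hc : IsCartesian E J M)
    (he : E e) (hj : J j) (hm : M m) (hfac : e ≫ j ≫ m = tr)
    (hk : Classifies Ω tr m k)
    {S X : C} {n : S ⟶ X} (hn : Mono n) {c : X ⟶ Ω} (hcl : Classifies Ω tr n c)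
    (hck : c ≫ k = c) : M n := by
  obtain ⟨S', u, nb, hun, hu, hMnb, hnbmono, hclnb⟩ :=
    closure_exists h hc he hj hm hfac hk hn hcl
  rw [hck] at hclnb
  obtain ⟨i, hi⟩ := iso_of_same_cls hcl hclnb
  have := h.precomp_iso_M i.hom nb (by infer_instance) hMnb
  rwa [hi] at this

lemma tr_k (hΩ : IsClassifier Ω tr)
    (he : E e) (hj : J j) (hm : M m) (hfac : e ≫ j ≫ m = tr)
    (hk : Classifies Ω tr m k) (hmono_m : Mono m) : tr ≫ k = tr := by
  have h1 : Classifies Ω tr (𝟙 (⊤_ C)) (tr ≫ k) := by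
    have s := isPullback_id_of_mono_factor m hmono_m (e ≫ j)
    rw [show (e ≫ j) ≫ m = tr by rw [Category.assoc, hfac]] at s
    have := s.paste_horiz hk
    rwa [show (e ≫ j) ≫ terminal.from B = terminal.from (⊤_ C) from terminal.hom_ext _ _] at this
  have h2 : Classifies Ω tr (𝟙 (⊤_ C)) tr := by
    show IsPullback (terminal.from (⊤_ C)) (𝟙 (⊤_ C)) tr tr
    rw [show terminal.from (⊤_ C) = 𝟙 (⊤_ C) from terminal.hom_ext _ _]
    have := isPullback_id_of_mono_factor tr (from_terminal_mono tr) (𝟙 (⊤_ C))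
    rwa [Category.id_comp] at this
  exact cls_unique hΩ (by infer_instance) h1 h2

lemma dense_of_mono_compJE (h : IsDFS E J M) (hc : IsCartesian E J M) (hΩ : IsClassifier Ω tr)
    (he : E e) (hj : J j) (hm : M m) (hfac : e ≫ j ≫ m = tr)
    (hk : Classifies Ω tr m k)
    {S X : C} {n : S ⟶ X} (hn : Mono n) (hJE : Comp J E n) : IsDense Ω tr k n := by
  obtain ⟨c, hcl, -⟩ := hΩ n hn
  obtain ⟨S', u, nb, hun, hu, hMnb, hnbmono, hclnb⟩ :=
    closure_exists h hc he hj hm hfac hk hn hcl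
  obtain ⟨hq, ⟨hq1, hq2⟩, -⟩ := orth_compJE_M h hJE hMnb u (𝟙 X)
    (by rw [Category.comp_id, hun])
  haveI hnbiso : IsIso nb := by
    refine ⟨hq, ?_, hq2⟩
    have : (nb ≫ hq) ≫ nb = 𝟙 S' ≫ nb := by
      rw [Category.assoc, hq2, Category.comp_id, Category.id_comp]
    exact hnbmono.right_cancellation _ _ this
  refine ⟨c, hcl, ?_⟩
  exact cls_unique hΩ hnbmono hclnb (cls_iso nb)

lemma mono_compJE_of_dense (h : IsDFS E J M) (hc : IsCartesian E J M) (hΩ : IsClassifier Ω tr)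
    (he : E e) (hj : J j) (hm : M m) (hfac : e ≫ j ≫ m = tr)
    (hk : Classifies Ω tr m k)
    {S X : C} {n : S ⟶ X} (hn : Mono n) (hd : IsDense Ω tr k n) : Comp J E n := by
  obtain ⟨c, hcl, hck⟩ := hd
  obtain ⟨S', u, nb, hun, hu, hMnb, hnbmono, hclnb⟩ :=
    closure_exists h hc he hj hm hfac hk hn hcl
  rw [hck] at hclnb
  obtain ⟨i, hi⟩ := iso_of_same_cls hclnb (cls_id X)
  rw [Category.comp_id] at hi
  have hnbiso : IsIso nb := by rw [← hi]; infer_instance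
  have : Comp J E (u ≫ nb) :=
    compJE_comp h hc hu (compJE_of_E h (iso_mem_E h nb hnbiso))
  rwa [hun] at this

end Closure

section Meet

variable [HasFiniteLimits C] {Ω : C} {tr : ⊤_ C ⟶ Ω} {E J M : MorphismProperty C}
variable {A B : C} {e : ⊤_ C ⟶ A} {j : A ⟶ B} {m : B ⟶ Ω} {k : Ω ⟶ Ω}

lemma mono_prod_map {W X Y Z : C} {f : W ⟶ X} {g : Y ⟶ Z} (hf : Mono f) (hg : Mono g) :
    Mono (prod.map f g) := by
  constructor
  intro T a b hab
  apply Limits.prod.hom_ext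
  · apply hf.right_cancellation
    have := congrArg (fun t => t ≫ prod.fst) hab
    simpa using this
  · apply hg.right_cancellation
    have := congrArg (fun t => t ≫ prod.snd) hab
    simpa using this

lemma isPullback_prod_map_fst {W X : C} (f : W ⟶ X) (Z : C) :
    IsPullback prod.fst (prod.map f (𝟙 Z)) f prod.fst := by
  refine IsPullback.of_isLimit' ⟨by simp⟩ ?_
  refine PullbackCone.IsLimit.mk _ (fun s => prod.lift s.fst (s.snd ≫ prod.snd))
    (fun s => by simp [prod.lift_fst, prod.lift_snd]) (fun s => ?_) (fun s w h1 h2 => ?_)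
  · apply Limits.prod.hom_ext
    · simp [s.condition, prod.lift_fst, prod.lift_snd]
    · simp [prod.lift_fst, prod.lift_snd]
  · apply Limits.prod.hom_ext
    · simpa [prod.lift_fst, prod.lift_snd] using h1
    · have := congrArg (fun t => t ≫ (prod.snd : X ⨯ Z ⟶ Z)) h2
      simpa [prod.lift_fst, prod.lift_snd] using this

lemma isPullback_prod_map_snd {W X : C} (f : W ⟶ X) (Z : C) :
    IsPullback prod.snd (prod.map (𝟙 Z) f) f prod.snd := by
  refine IsPullback.of_isLimit' ⟨by simp⟩ ?_
  refine PullbackCone.IsLimit.mk _ (fun s => prod.lift (s.snd ≫ prod.fst) s.fst)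
    (fun s => by simp [prod.lift_fst, prod.lift_snd]) (fun s => ?_) (fun s w h1 h2 => ?_)
  · apply Limits.prod.hom_ext
    · simp [prod.lift_fst, prod.lift_snd]
    · simp [s.condition, prod.lift_fst, prod.lift_snd]
  · apply Limits.prod.hom_ext
    · have := congrArg (fun t => t ≫ (prod.fst : Z ⨯ X ⟶ Z)) h2
      simpa [prod.lift_fst, prod.lift_snd] using this
    · simpa [prod.lift_fst, prod.lift_snd] using h1

lemma orth_comp_right {X Y Z A' B' : C} {f : A' ⟶ B'} {g : X ⟶ Y} {g' : Y ⟶ Z}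
    (h1 : Orth f g) (h2 : Orth f g') : Orth f (g ≫ g') := by
  intro u v huv
  obtain ⟨h₁, ⟨hh1, hh2⟩, hu1⟩ := h2 (u ≫ g) v (by rw [Category.assoc, huv])
  obtain ⟨h₂, ⟨hk1, hk2⟩, hu2⟩ := h1 u h₁ hh1.symm
  refine ⟨h₂, ⟨hk1, by rw [← Category.assoc, hk2, hh2]⟩, fun y hy => ?_⟩
  have : y ≫ g = h₁ := hu1 _ ⟨by rw [← Category.assoc, hy.1], by rw [Category.assoc, hy.2]⟩
  exact hu2 y ⟨hy.1, this⟩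

lemma M_comp (h : IsDFS E J M) (hc : IsCartesian E J M) {X Y Z : C} {g : X ⟶ Y} {g' : Y ⟶ Z}
    (hg : M g) (hg' : M g') : M (g ≫ g') := by
  refine mem_M_of_orth h hc _ (fun D D' f hf => ?_)
  exact orth_comp_right (orth_compJE_M h hf hg) (orth_compJE_M h hf hg')

lemma M_prod_map (h : IsDFS E J M) (hc : IsCartesian E J M) (hm : M m) :
    M (prod.map m m) := by
  have h1 : M (prod.map m (𝟙 B)) :=
    M_pb_stable h hc m prod.fst (prod.map m (𝟙 B)) prod.fst (isPullback_prod_map_fst m B) hm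
  have h2 : M (prod.map (𝟙 Ω) m) :=
    M_pb_stable h hc m prod.snd (prod.map (𝟙 Ω) m) prod.snd (isPullback_prod_map_snd m Ω) hm
  have := M_comp h hc h1 h2
  rwa [prod.map_map, Category.comp_id, Category.id_comp] at this

lemma compJE_lift_ej (h : IsDFS E J M) (hc : IsCartesian E J M)
    (he : E e) (hj : J j) : Comp J E (prod.lift (e ≫ j) (e ≫ j)) := by
  have hejJE : Comp J E (e ≫ j) := ⟨A, e, j, he, hj, rfl⟩
  have h1 : Comp J E (prod.map (e ≫ j) (𝟙 (⊤_ C))) :=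
    hc.2.1 (e ≫ j) prod.fst _ prod.fst (isPullback_prod_map_fst (e ≫ j) _) hejJE
  have h2 : Comp J E (prod.map (𝟙 B) (e ≫ j)) :=
    hc.2.1 (e ≫ j) prod.snd _ prod.snd (isPullback_prod_map_snd (e ≫ j) _) hejJE
  have hdiso : IsIso (prod.lift (𝟙 (⊤_ C)) (𝟙 (⊤_ C))) := by
    refine ⟨prod.fst, by simp [prod.lift_fst, prod.lift_snd], ?_⟩
    apply Limits.prod.hom_ext
    · simp [prod.lift_fst, prod.lift_snd]
    · simp
      exact terminal.hom_ext _ _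
  have hd : Comp J E (prod.lift (𝟙 (⊤_ C)) (𝟙 (⊤_ C))) :=
    compJE_of_E h (iso_mem_E h _ hdiso)
  have := compJE_comp h hc hd (compJE_comp h hc h1 h2)
  rwa [show prod.lift (𝟙 (⊤_ C)) (𝟙 (⊤_ C)) ≫ prod.map (e ≫ j) (𝟙 (⊤_ C)) ≫
      prod.map (𝟙 B) (e ≫ j) = prod.lift (e ≫ j) (e ≫ j) by
    rw [prod.map_map, Category.comp_id, Category.id_comp, prod.lift_map]
    simp] at this

lemma lift_ej_map_mm (hfac : e ≫ j ≫ m = tr) :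
    prod.lift (e ≫ j) (e ≫ j) ≫ prod.map m m = prod.lift tr tr := by
  rw [prod.lift_map, Category.assoc, hfac]

lemma cls_prod_map_mapkk (hΩ : IsClassifier Ω tr) (hmono_m : Mono m)
    (hk : Classifies Ω tr m k) {meet : Ω ⨯ Ω ⟶ Ω}
    (hmeet : Classifies Ω tr (prod.lift tr tr) meet) :
    Classifies Ω tr (prod.map m m) (prod.map k k ≫ meet) := by
  have s : IsPullback (terminal.from (B ⨯ B)) (prod.map m m) (prod.lift tr tr) (prod.map k k) := by
    refine isPullback_to_terminal _ _ _ (mono_prod_map hmono_m hmono_m) ?_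
      (fun {T} b hb => prod.lift (hk.lift (terminal.from T) (b ≫ prod.fst)
        (by have := congrArg (fun t => t ≫ (prod.fst : Ω ⨯ Ω ⟶ Ω)) hb; simpa [prod.lift_fst, prod.lift_snd] using this))
        (hk.lift (terminal.from T) (b ≫ prod.snd)
        (by have := congrArg (fun t => t ≫ (prod.snd : Ω ⨯ Ω ⟶ Ω)) hb; simpa [prod.lift_fst, prod.lift_snd] using this)))
      (fun {T} b hb => ?_)
    · apply Limits.prod.hom_ext
      · simp only [Category.assoc, prod.lift_fst, prod.map_fst, prod.map_fst_assoc]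
        rw [← hk.w, ← Category.assoc]
        congr 1
        exact terminal.hom_ext _ _
      · simp only [Category.assoc, prod.lift_snd, prod.map_snd, prod.map_snd_assoc]
        rw [← hk.w, ← Category.assoc]
        congr 1
        exact terminal.hom_ext _ _
    · apply Limits.prod.hom_ext
      · simp [prod.lift_fst, prod.lift_snd]; exact hk.lift_snd _ _ _
      · simp [prod.lift_fst, prod.lift_snd]; exact hk.lift_snd _ _ _
  have := s.paste_horiz hmeet
  rwa [show terminal.from (B ⨯ B) ≫ terminal.from (⊤_ C) = terminal.from (B ⨯ B) from
    terminal.hom_ext _ _] at this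

lemma meet_k (h : IsDFS E J M) (hc : IsCartesian E J M) (hΩ : IsClassifier Ω tr)
    (he : E e) (hj : J j) (hm : M m) (hfac : e ≫ j ≫ m = tr)
    (hk : Classifies Ω tr m k) {meet : Ω ⨯ Ω ⟶ Ω}
    (hmeet : Classifies Ω tr (prod.lift tr tr) meet) :
    meet ≫ k = prod.map k k ≫ meet := by
  have hmono_m : Mono m := M_mono h hc hm
  have hMmm : M (prod.map m m) := M_prod_map h hc hm
  have hmm_mono : Mono (prod.map m m) := mono_prod_map hmono_m hmono_m
  obtain ⟨S', u₀, nb, hun, hu₀, hMnb, hnbmono, hclnb⟩ :=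
    closure_exists h hc he hj hm hfac hk (from_terminal_mono (prod.lift tr tr)) hmeet
  have hu₁ : Comp J E (prod.lift (e ≫ j) (e ≫ j)) := compJE_lift_ej h hc he hj
  -- fillers between the two factorizations
  obtain ⟨θ, ⟨hθ1, hθ2⟩, -⟩ := orth_compJE_M h hu₀ hMmm (prod.lift (e ≫ j) (e ≫ j)) nb
    (by rw [lift_ej_map_mm hfac, hun])
  obtain ⟨θ', ⟨hθ'1, hθ'2⟩, -⟩ := orth_compJE_M h hu₁ hMnb u₀ (prod.map m m)
    (by rw [hun, lift_ej_map_mm hfac])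
  have hθiso : IsIso θ := by
    refine ⟨θ', ?_, ?_⟩
    · have : (θ ≫ θ') ≫ nb = 𝟙 S' ≫ nb := by
        rw [Category.assoc, hθ'2, hθ2, Category.id_comp]
      exact hnbmono.right_cancellation _ _ this
    · have : (θ' ≫ θ) ≫ prod.map m m = 𝟙 (B ⨯ B) ≫ prod.map m m := by
        rw [Category.assoc, hθ2, hθ'2, Category.id_comp]
      exact hmm_mono.right_cancellation _ _ this
  have hcls2 : Classifies Ω tr (prod.map m m) (meet ≫ k) := by
    have := cls_precomp_iso (inv θ) (by infer_instance) hclnb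
    rwa [show inv θ ≫ nb = prod.map m m by
      rw [← hθ2, ← Category.assoc, IsIso.inv_hom_id, Category.id_comp]] at this
  exact cls_unique hΩ hmm_mono hcls2 (cls_prod_map_mapkk hΩ hmono_m hk hmeet)

end Meet

section Internal

variable [HasFiniteLimits C] [CartesianMonoidalCategory C] [MonoidalClosed C]
variable {Ω : C} {tr : ⊤_ C ⟶ Ω}

open MonoidalCategory MonoidalClosed CartesianMonoidalCategory

lemma comp_tru {W Z : C} (t : Z ⟶ W) : t ≫ tru tr W = tru tr Z := by
  rw [tru, tru, ← Category.assoc]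
  congr 1
  exact terminal.hom_ext _ _

lemma cls_self_true {S X : C} {n : S ⟶ X} {c : X ⟶ Ω} (hcl : Classifies Ω tr n c) :
    n ≫ c = tru tr S := hcl.w.symm

lemma mono_from_unit {X : C} (g : 𝟙_ C ⟶ X) : Mono g := by
  have : IsSplitMono g := IsSplitMono.mk' ⟨toUnit X, toUnit_unique _ _⟩
  exact IsSplitMono.mono g

lemma cls_pullback (b : {Z : C} → (Z ⟶ Ω) → True) : True := trivial

lemma cls_pb {Z : C} (b : Z ⟶ Ω) :
    haveI := from_terminal_mono tr
    Classifies Ω tr (pullback.snd tr b) b := by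
  haveI := from_terminal_mono tr
  have := IsPullback.of_hasPullback tr b
  rwa [show pullback.fst tr b = terminal.from _ from terminal.hom_ext _ _] at this

/-- The "constantly true" element of a power object. -/
noncomputable def trueEl (tr : ⊤_ C ⟶ Ω) (W : C) : 𝟙_ C ⟶ (ihom W).obj Ω :=
  curry (tru tr (W ⊗ 𝟙_ C))

/-- The internal universal quantifier over `W`. -/
noncomputable def fa (hΩ : IsClassifier Ω tr) (W : C) : ((ihom W).obj Ω) ⟶ Ω :=
  (hΩ (trueEl tr W) (mono_from_unit _)).choose

lemma cls_fa (hΩ : IsClassifier Ω tr) (W : C) : Classifies Ω tr (trueEl tr W) (fa hΩ W) :=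
  (hΩ (trueEl tr W) (mono_from_unit _)).choose_spec.1

/-- Soundness of the universal quantifier. -/
lemma forall_iff (hΩ : IsClassifier Ω tr) {Z W : C} (g : Z ⟶ (ihom W).obj Ω) :
    g ≫ fa hΩ W = tru tr Z ↔ uncurry g = tru tr (W ⊗ Z) := by
  have hcur : ∀ h' : Z ⟶ 𝟙_ C, uncurry (h' ≫ trueEl tr W) = tru tr (W ⊗ Z) := by
    intro h'
    rw [uncurry_natural_left, trueEl, uncurry_curry]
    exact comp_tru _
  constructor
  · intro hg
    obtain ⟨h', hh⟩ := factors_of_comp_eq_true (cls_fa hΩ W) g hg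
    rw [← hh]
    exact hcur h'
  · intro hg
    have hfac : toUnit Z ≫ trueEl tr W = g := by
      apply uncurry_injective
      rw [hcur (toUnit Z), hg]
    exact comp_eq_true_of_factors (cls_fa hΩ W) hfac

/-- A chosen internal conjunction. -/
noncomputable def meet0 (hΩ : IsClassifier Ω tr) : Ω ⨯ Ω ⟶ Ω :=
  (hΩ (prod.lift tr tr) (from_terminal_mono _)).choose

lemma cls_meet0 (hΩ : IsClassifier Ω tr) : Classifies Ω tr (prod.lift tr tr) (meet0 hΩ) :=
  (hΩ (prod.lift tr tr) (from_terminal_mono _)).choose_spec.1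

/-- The internal implication. -/
noncomputable def impl (hΩ : IsClassifier Ω tr) : Ω ⨯ Ω ⟶ Ω :=
  (hΩ (equalizer.ι (meet0 hΩ) prod.fst) inferInstance).choose

lemma cls_impl (hΩ : IsClassifier Ω tr) :
    Classifies Ω tr (equalizer.ι (meet0 hΩ) prod.fst) (impl hΩ) :=
  (hΩ (equalizer.ι (meet0 hΩ) prod.fst) inferInstance).choose_spec.1

lemma meet_left_of_le (hΩ : IsClassifier Ω tr) {Z Na : C} {na : Na ⟶ Z} (hmono : Mono na)
    {a b : Z ⟶ Ω} (hna : Classifies Ω tr na a) (hb : na ≫ b = tru tr Na) :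
    prod.lift a b ≫ meet0 hΩ = a := by
  have s : IsPullback (terminal.from Na) na (prod.lift tr tr) (prod.lift a b) := by
    refine isPullback_to_terminal _ _ _ hmono ?_
      (fun {T} t ht => hna.lift (terminal.from T) t
        (by have := congrArg (fun z => z ≫ (prod.fst : Ω ⨯ Ω ⟶ Ω)) ht; simpa [prod.lift_fst, prod.lift_snd] using this))
      (fun {T} t ht => hna.lift_snd _ _ _)
    apply Limits.prod.hom_ext
    · simp only [Category.assoc, prod.lift_fst]
      exact hna.w
    · simp only [Category.assoc, prod.lift_snd]
      exact hb.symm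
  have := s.paste_horiz (cls_meet0 hΩ)
  rw [show terminal.from Na ≫ terminal.from (⊤_ C) = terminal.from Na from
    terminal.hom_ext _ _] at this
  exact cls_unique hΩ hmono this hna

lemma meet_right_of_le (hΩ : IsClassifier Ω tr) {Z Nb : C} {nb : Nb ⟶ Z} (hmono : Mono nb)
    {a b : Z ⟶ Ω} (hnb : Classifies Ω tr nb b) (ha : nb ≫ a = tru tr Nb) :
    prod.lift a b ≫ meet0 hΩ = b := by
  have s : IsPullback (terminal.from Nb) nb (prod.lift tr tr) (prod.lift a b) := by
    refine isPullback_to_terminal _ _ _ hmono ?_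
      (fun {T} t ht => hnb.lift (terminal.from T) t
        (by have := congrArg (fun z => z ≫ (prod.snd : Ω ⨯ Ω ⟶ Ω)) ht; simpa [prod.lift_fst, prod.lift_snd] using this))
      (fun {T} t ht => hnb.lift_snd _ _ _)
    apply Limits.prod.hom_ext
    · simp only [Category.assoc, prod.lift_fst]
      exact ha.symm
    · simp only [Category.assoc, prod.lift_snd]
      exact hnb.w
  have := s.paste_horiz (cls_meet0 hΩ)
  rw [show terminal.from Nb ≫ terminal.from (⊤_ C) = terminal.from Nb from
    terminal.hom_ext _ _] at this
  exact cls_unique hΩ hmono this hnb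

lemma impl_intro (hΩ : IsClassifier Ω tr) {Z : C} {a b : Z ⟶ Ω}
    (hle : prod.lift a b ≫ meet0 hΩ = a) : prod.lift a b ≫ impl hΩ = tru tr Z := by
  have hcond : prod.lift a b ≫ meet0 hΩ = prod.lift a b ≫ prod.fst := by
    rw [hle, prod.lift_fst]
  exact comp_eq_true_of_factors (cls_impl hΩ) (equalizer.lift_ι (prod.lift a b) hcond)

lemma mp (hΩ : IsClassifier Ω tr) {Z : C} {a b : Z ⟶ Ω}
    (himpl : prod.lift a b ≫ impl hΩ = tru tr Z) (ha : a = tru tr Z) : b = tru tr Z := by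
  obtain ⟨h', hh⟩ := factors_of_comp_eq_true (cls_impl hΩ) _ himpl
  have h1 : prod.lift a b ≫ meet0 hΩ = a := by
    rw [← hh, Category.assoc, equalizer.condition, ← Category.assoc, hh, prod.lift_fst]
  haveI := from_terminal_mono tr
  have h2 : prod.lift a b ≫ meet0 hΩ = b := by
    refine meet_right_of_le hΩ inferInstance (cls_pb b) ?_
    rw [ha]
    exact comp_tru _
  rw [← h2, h1, ha]

/-- The singleton-style internal element pointing at a predicate. -/
noncomputable def sigmaEl (χ₀ : Y' ⟶ Ω) : 𝟙_ C ⟶ (ihom Y').obj Ω :=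
  curry (fst Y' (𝟙_ C) ≫ χ₀)

lemma ev_sigma {Y' Z : C} (χ₀ : Y' ⟶ Ω) (g : Z ⟶ Y') :
    lift g (toUnit Z ≫ sigmaEl χ₀) ≫ (ihom.ev Y').app Ω = g ≫ χ₀ := by
  have h1 : lift g (toUnit Z ≫ sigmaEl χ₀) = lift g (toUnit Z) ≫ (Y' ◁ sigmaEl χ₀) := by
    apply CartesianMonoidalCategory.hom_ext <;> simp
  rw [h1, Category.assoc, ← uncurry_eq, sigmaEl, uncurry_curry, ← Category.assoc, lift_fst]

section ImageConstr

variable {X Y : C} (hΩ : IsClassifier Ω tr)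

/-- `beta2 f = λ (x, S). S (f x)`. -/
noncomputable def beta2 (f : X ⟶ Y) : X ⊗ ((ihom Y).obj Ω) ⟶ Ω :=
  (f ▷ _) ≫ (ihom.ev Y).app Ω

/-- `alpha f = λ S. ∀ x, S (f x)`. -/
noncomputable def alpha (f : X ⟶ Y) : ((ihom Y).obj Ω) ⟶ Ω :=
  curry (beta2 f) ≫ fa hΩ X

/-- `phi f = λ (S, y). (∀ x, S (f x)) ⇒ S y`. -/
noncomputable def phi (f : X ⟶ Y) : ((ihom Y).obj Ω) ⊗ Y ⟶ Ω :=
  prod.lift (fst _ _ ≫ alpha hΩ f) (lift (snd _ _) (fst _ _) ≫ (ihom.ev Y).app Ω) ≫ impl hΩ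

/-- `cim f = λ y. ∀ S, ((∀ x, S (f x)) ⇒ S y)`, the characteristic map of the image. -/
noncomputable def cim (f : X ⟶ Y) : Y ⟶ Ω :=
  curry (phi hΩ f) ≫ fa hΩ ((ihom Y).obj Ω)

lemma cim_iff (f : X ⟶ Y) {Z : C} (g : Z ⟶ Y) :
    (g ≫ cim hΩ f = tru tr Z) ↔
      ((((ihom Y).obj Ω) ◁ g) ≫ phi hΩ f = tru tr ((((ihom Y).obj Ω)) ⊗ Z)) := by
  rw [cim, ← Category.assoc, forall_iff hΩ, uncurry_natural_left, uncurry_curry]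

lemma alpha_sigma (f : X ⟶ Y) (χ₀ : Y ⟶ Ω) (hfχ : f ≫ χ₀ = tru tr X) :
    sigmaEl χ₀ ≫ alpha hΩ f = tru tr (𝟙_ C) := by
  rw [alpha, ← Category.assoc, forall_iff hΩ, uncurry_natural_left, uncurry_curry, beta2,
    ← Category.assoc, whisker_exchange, Category.assoc, ← uncurry_eq, sigmaEl, uncurry_curry,
    ← Category.assoc, whiskerRight_fst, Category.assoc, hfχ]
  exact comp_tru _

lemma f_cim (f : X ⟶ Y) : f ≫ cim hΩ f = tru tr X := by
  rw [cim_iff]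
  rw [phi, ← Category.assoc, prod.comp_lift]
  have ha' : (((ihom Y).obj Ω) ◁ f) ≫ (fst _ Y ≫ alpha hΩ f) = fst _ X ≫ alpha hΩ f := by
    rw [← Category.assoc, whiskerLeft_fst]
  have hb' : (((ihom Y).obj Ω) ◁ f) ≫ (lift (snd _ Y) (fst _ Y) ≫ (ihom.ev Y).app Ω) =
      lift (snd _ X ≫ f) (fst _ X) ≫ (ihom.ev Y).app Ω := by
    rw [← Category.assoc]
    congr 1
    apply CartesianMonoidalCategory.hom_ext <;> simp
  rw [ha', hb']
  haveI := from_terminal_mono tr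
  apply impl_intro hΩ
  refine meet_left_of_le hΩ inferInstance (cls_pb _) ?_
  set na := pullback.snd tr (fst ((ihom Y).obj Ω) X ≫ alpha hΩ f) with hna_def
  have hnaa : na ≫ (fst _ X ≫ alpha hΩ f) = tru tr _ := cls_self_true (cls_pb _)
  have hg₀ : ((na ≫ fst _ X) ≫ curry (beta2 f)) ≫ fa hΩ X = tru tr _ := by
    rw [Category.assoc]
    rw [show (na ≫ fst _ X) ≫ curry (beta2 f) ≫ fa hΩ X = na ≫ (fst _ X ≫ alpha hΩ f) by
      simp only [alpha, Category.assoc]; exact Category.assoc _ _ _]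
    exact hnaa
  have huc := (forall_iff hΩ _).mp hg₀
  rw [uncurry_natural_left, uncurry_curry] at huc
  have hL : na ≫ (lift (snd _ X ≫ f) (fst _ X) ≫ (ihom.ev Y).app Ω) =
      lift (na ≫ snd _ X ≫ f) (na ≫ fst _ X) ≫ (ihom.ev Y).app Ω := by
    rw [← Category.assoc, comp_lift]
  have hR : lift (na ≫ snd _ X) (𝟙 _) ≫ ((X ◁ (na ≫ fst _ X)) ≫ beta2 f) =
      lift (na ≫ snd _ X ≫ f) (na ≫ fst _ X) ≫ (ihom.ev Y).app Ω := by
    rw [beta2, ← Category.assoc, ← Category.assoc]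
    congr 1
    apply CartesianMonoidalCategory.hom_ext <;> simp
  calc na ≫ (lift (snd _ X ≫ f) (fst _ X) ≫ (ihom.ev Y).app Ω)
      = lift (na ≫ snd _ X ≫ f) (na ≫ fst _ X) ≫ (ihom.ev Y).app Ω := hL
    _ = lift (na ≫ snd _ X) (𝟙 _) ≫ ((X ◁ (na ≫ fst _ X)) ≫ beta2 f) := hR.symm
    _ = lift (na ≫ snd _ X) (𝟙 _) ≫ tru tr _ := by rw [huc]
    _ = tru tr _ := comp_tru _

lemma image_fac (HO : IsClassifier Ω tr) (f : X ⟶ Y) : ∃ (I : C) (p : X ⟶ I) (d : I ⟶ Y),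
    Epi p ∧ Mono d ∧ p ≫ d = f := by
  haveI := from_terminal_mono tr
  have hf1 : terminal.from X ≫ tr = f ≫ cim HO f := (f_cim HO f).symm
  refine ⟨pullback tr (cim HO f), pullback.lift (terminal.from X) f hf1,
    pullback.snd tr (cim HO f), ?_, inferInstance, pullback.lift_snd _ _ _⟩
  set d : pullback tr (cim HO f) ⟶ Y := pullback.snd tr (cim HO f) with hd_def
  set p : X ⟶ pullback tr (cim HO f) := pullback.lift (terminal.from X) f hf1 with hp_def
  have hpd : p ≫ d = f := pullback.lift_snd _ _ _
  constructor
  intro T u v huv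
  set ι : equalizer u v ⟶ pullback tr (cim HO f) := equalizer.ι u v with hι_def
  have hp' : equalizer.lift p huv ≫ ι = p := equalizer.lift_ι p huv
  have hS₀mono : Mono (ι ≫ d) := mono_comp _ _
  obtain ⟨χ₀, hχcls, -⟩ := HO (ι ≫ d) hS₀mono
  have hfχ : f ≫ χ₀ = tru tr X :=
    comp_eq_true_of_factors hχcls
      (show equalizer.lift p huv ≫ (ι ≫ d) = f by rw [← Category.assoc, hp', hpd])
  have hdc : d ≫ cim HO f = tru tr _ := cls_self_true (cls_pb _)
  have hphi := (cim_iff HO f d).mp hdc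
  have hev : lift (toUnit _ ≫ sigmaEl χ₀) d ≫ phi HO f = tru tr (pullback tr (cim HO f)) := by
    have l3 : lift (toUnit _ ≫ sigmaEl χ₀) (𝟙 _) ≫ (((ihom Y).obj Ω) ◁ d) =
        lift (toUnit _ ≫ sigmaEl χ₀) d := by
      apply CartesianMonoidalCategory.hom_ext <;> simp
    rw [← l3, Category.assoc, hphi]
    exact comp_tru _
  rw [phi, ← Category.assoc, prod.comp_lift] at hev
  have ha₁ : lift (toUnit _ ≫ sigmaEl χ₀) d ≫ (fst _ Y ≫ alpha HO f) =
      tru tr (pullback tr (cim HO f)) := by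
    rw [← Category.assoc, lift_fst, Category.assoc, alpha_sigma HO f χ₀ hfχ]
    exact comp_tru _
  have hb₁ : lift (toUnit _ ≫ sigmaEl χ₀) d ≫ (lift (snd _ Y) (fst _ Y) ≫ (ihom.ev Y).app Ω) =
      d ≫ χ₀ := by
    rw [← Category.assoc]
    rw [show lift (toUnit _ ≫ sigmaEl χ₀) d ≫ lift (snd _ Y) (fst _ Y) =
      lift d (toUnit _ ≫ sigmaEl χ₀) by apply CartesianMonoidalCategory.hom_ext <;> simp]
    exact ev_sigma χ₀ d
  have hb_true : d ≫ χ₀ = tru tr (pullback tr (cim HO f)) := by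
    rw [← hb₁]
    exact mp HO hev ha₁
  obtain ⟨h', hh⟩ := factors_of_comp_eq_true hχcls d hb_true
  have hmono_d : Mono d := inferInstance
  have hhι : h' ≫ ι = 𝟙 _ := by
    apply hmono_d.right_cancellation
    rw [Category.assoc, hh, Category.id_comp]
  calc u = (h' ≫ ι) ≫ u := by rw [hhι, Category.id_comp]
  _ = (h' ≫ ι) ≫ v := by rw [Category.assoc, equalizer.condition u v, ← Category.assoc]
  _ = v := by rw [hhι, Category.id_comp]

end ImageConstr

end Internal

section Final

variable [HasFiniteLimits C] {Ω : C} {tr : ⊤_ C ⟶ Ω} {E J M : MorphismProperty C}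
variable {A B : C} {e : ⊤_ C ⟶ A} {j : A ⟶ B} {m : B ⟶ Ω} {k : Ω ⟶ Ω}

lemma dense_of_factor_JE (h : IsDFS E J M) (hc : IsCartesian E J M) (hΩ : IsClassifier Ω tr)
    (he : E e) (hj : J j) (hm : M m) (hfac : e ≫ j ≫ m = tr)
    (hk : Classifies Ω tr m k)
    {X Y I : C} {f : X ⟶ Y} (hf : Comp J E f) {p : X ⟶ I} {d : I ⟶ Y} (hd : Mono d)
    (hfact : p ≫ d = f) : IsDense Ω tr k d := by
  obtain ⟨c, hcl, -⟩ := hΩ d hd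
  obtain ⟨S', u, nb, hun, hu, hMnb, hnbmono, hclnb⟩ :=
    closure_exists h hc he hj hm hfac hk hd hcl
  obtain ⟨hq, ⟨hq1, hq2⟩, -⟩ := orth_compJE_M h hf hMnb (p ≫ u) (𝟙 Y)
    (by rw [Category.comp_id, Category.assoc, hun, hfact])
  haveI hnbiso : IsIso nb := by
    refine ⟨hq, ?_, hq2⟩
    have : (nb ≫ hq) ≫ nb = 𝟙 S' ≫ nb := by
      rw [Category.assoc, hq2, Category.comp_id, Category.id_comp]
    exact hnbmono.right_cancellation _ _ this
  exact ⟨c, hcl, cls_unique hΩ hnbmono hclnb (cls_iso nb)⟩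

end Final

end S12
/-- Let `(E, J, M)` be a cartesian dfs on a topos `C`, let
`m ∘ j ∘ e` be the `(E,J,M)`-factorization of `true : 1 ⟶ Ω` and `k = char m`.
Then `k` is a Lawvere–Tierney topology, `M` is the class of `k`-closed
monomorphisms, `J·E = DnsMono_k · Epi`, and `(E, J, M)` is a Bousfield localization
of the dfs `(Epi, DnsMono_k, ClsMono_k)`, i.e. `ClsMono_k · Epi ⊆ M · E`. -/
theorem statement12 {C : Type u} [Category.{v} C] [HasFiniteLimits C]
    [CartesianMonoidalCategory C] [MonoidalClosed C]
    (Ω : C) (tr : ⊤_ C ⟶ Ω) (hΩ : DFS.IsClassifier Ω tr)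
    (E J M : MorphismProperty C) (h : DFS.IsDFS E J M) (hc : DFS.IsCartesian E J M)
    (A B : C) (e : ⊤_ C ⟶ A) (j : A ⟶ B) (m : B ⟶ Ω)
    (he : E e) (hj : J j) (hm : M m) (hfac : e ≫ j ≫ m = tr)
    (k : Ω ⟶ Ω) (hk : DFS.Classifies Ω tr m k) :
    DFS.IsLT Ω tr k ∧
    M = DFS.closedMonos Ω tr k ∧
    DFS.Comp J E = DFS.Comp (DFS.denseMonos Ω tr k) DFS.epis ∧
    (∀ ⦃X Y : C⦄ (f : X ⟶ Y),
      DFS.Comp (DFS.closedMonos Ω tr k) DFS.epis f → DFS.Comp M E f) := by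
  have hmono_m : Mono m := S12.M_mono h hc hm
  refine ⟨⟨S12.tr_k hΩ he hj hm hfac hk hmono_m,
    S12.M_mem_closed h hc hΩ he hj hm hfac hk hm hk,
    fun meet hmeet => S12.meet_k h hc hΩ he hj hm hfac hk hmeet⟩, ?_, ?_, ?_⟩
  · apply funext; intro X; apply funext; intro Y; apply funext; intro n
    apply propext
    constructor
    · intro hn
      have hmono := S12.M_mono h hc hn
      obtain ⟨c, hcl, -⟩ := hΩ n hmono
      exact ⟨hmono, c, hcl, S12.M_mem_closed h hc hΩ he hj hm hfac hk hn hcl⟩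
    · rintro ⟨hmono, c, hcl, hck⟩
      exact S12.closed_mem_M h hc he hj hm hfac hk hmono hcl hck
  · apply funext; intro X; apply funext; intro Y; apply funext; intro f
    apply propext
    constructor
    · intro hf
      obtain ⟨I, p, d, hp, hd, hpd⟩ := S12.image_fac hΩ f
      exact ⟨I, p, d, hp,
        ⟨hd, S12.dense_of_factor_JE h hc hΩ he hj hm hfac hk hf hd hpd⟩, hpd⟩
    · rintro ⟨Z, pp, dd, hpp, ⟨hddmono, hdddense⟩, rfl⟩
      exact S12.compJE_comp h hc (S12.compJE_of_E h (S12.epi_mem_E h hc hΩ pp hpp))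
        (S12.mono_compJE_of_dense h hc hΩ he hj hm hfac hk hddmono hdddense)
  · intro X Y f hf
    obtain ⟨Z, pp, dd, hpp, ⟨hddmono, hddclosed⟩, rfl⟩ := hf
    obtain ⟨c, hcl, hck⟩ := hddclosed
    exact ⟨Z, pp, dd, S12.epi_mem_E h hc hΩ pp hpp,
      S12.closed_mem_M h hc he hj hm hfac hk hddmono hcl hck, rfl⟩
end

section
/- Let (E1, J1, M1) and (E2, J2, M2) be two cartesian double factorization systems on a topos C, and let k1, k2 be the Lawvere–Tierney topologies they generate (k_i = char(m_i), where m_i∘j_i∘e_i is the (E_i, J_i, M_i)-factorization of true : 1 → Ω). Then k1 = k2 if and only if J1·E1 = J2·E2, and also k1 = k2 if and only if M1 = M2. -/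
open CategoryTheory CategoryTheory.Limits

universe v u v₂ u₂

namespace DFS

section AuxCat

variable {C : Type u} [Category.{v} C]

theorem IsDFS.id_J {E J M : MorphismProperty C} (h : IsDFS E J M) (X : C) : J (𝟙 X) := by
  obtain ⟨A, B, e, j, m, he, hj, hm, hfac⟩ := h.fac (𝟙 X)
  obtain ⟨st, -, huniq⟩ := h.lift e j j m e m he hj hj hm rfl
  have h1 : ((𝟙 A, 𝟙 B) : (A ⟶ A) × (B ⟶ B)) = st :=
    huniq _ ⟨by simp, by simp, by simp⟩
  have h2 : ((j ≫ m ≫ e, m ≫ e ≫ j) : (A ⟶ A) × (B ⟶ B)) = st := by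
    refine huniq _ ⟨?_, ?_, ?_⟩
    · rw [← Category.assoc, ← Category.assoc, Category.assoc e j m, hfac, Category.id_comp]
    · simp
    · rw [Category.assoc, Category.assoc, hfac, Category.comp_id]
  have h12 := h1.trans h2.symm
  have hs : 𝟙 A = j ≫ m ≫ e := congrArg Prod.fst h12
  have ht : 𝟙 B = m ≫ e ≫ j := congrArg Prod.snd h12
  have hie : IsIso e := ⟨j ≫ m, hfac, by rw [Category.assoc]; exact hs.symm⟩
  have him : IsIso m := ⟨e ≫ j, ht.symm, by rw [Category.assoc]; exact hfac⟩
  have := h.comp_iso_J e j m hie him hj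
  rwa [hfac] at this

theorem IsDFS.orth_JE_M {E J M : MorphismProperty C} (h : IsDFS E J M)
    {A B B' X Y : C} {e : A ⟶ B} {j : B ⟶ B'} {m : X ⟶ Y}
    (he : E e) (hj : J j) (hm : M m) : Orth (e ≫ j) m := by
  intro u v huv
  obtain ⟨st, ⟨hs1, hs2, hs3⟩, huniq⟩ := h.lift e j (𝟙 X) m u v he hj (h.id_J X) hm
    (by rw [Category.id_comp, ← Category.assoc]; exact huv.symm)
  refine ⟨st.2, ⟨?_, hs3⟩, ?_⟩
  · have hs : st.1 = j ≫ st.2 := by simpa using hs2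
    rw [Category.assoc, ← hs, hs1]
  · rintro h' ⟨hh1, hh2⟩
    have := huniq (j ≫ h', h')
      ⟨by rw [← Category.assoc]; exact hh1, by simp, hh2⟩
    exact congrArg Prod.snd this

theorem IsDFS.orth_Comp {E J M : MorphismProperty C} (h : IsDFS E J M)
    {P Q X Y : C} {f : P ⟶ Q} {m : X ⟶ Y} (hf : Comp J E f) (hm : M m) : Orth f m := by
  obtain ⟨Z, e, j, he, hj, rfl⟩ := hf
  exact h.orth_JE_M he hj hm

theorem IsDFS.mono_of_M {E J M : MorphismProperty C} (h : IsDFS E J M)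
    (hc : IsCartesian E J M) {X Y : C} {m : X ⟶ Y} (hm : M m) : Mono m :=
  hc.2.2 m ⟨X, 𝟙 X, m, h.id_J X, hm, Category.id_comp m⟩

theorem IsDFS.M_stable {E J M : MorphismProperty C} (h : IsDFS E J M)
    (hc : IsCartesian E J M) : StableUnderPB M := by
  intro A B A' B' f g f' top hP hf
  obtain ⟨Z₀, Z, e₀, j₀, m₀, he₀, hj₀, hm₀, hfac₀⟩ := h.fac f'
  have hw : (e₀ ≫ j₀) ≫ m₀ = f' := by rw [Category.assoc]; exact hfac₀
  have horth := h.orth_JE_M he₀ hj₀ hf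
  obtain ⟨l, ⟨hl1, hl2⟩, -⟩ := horth top (m₀ ≫ g)
    (by rw [hP.w, ← hw, Category.assoc, Category.assoc])
  haveI hm₀mono : Mono m₀ := h.mono_of_M hc hm₀
  have ht' : l ≫ f = m₀ ≫ g := hl2
  have ht1 : hP.lift l m₀ ht' ≫ top = l := hP.lift_fst l m₀ ht'
  have ht2 : hP.lift l m₀ ht' ≫ f' = m₀ := hP.lift_snd l m₀ ht'
  have hwt : (e₀ ≫ j₀) ≫ hP.lift l m₀ ht' = 𝟙 A' := by
    apply hP.hom_ext
    · rw [Category.assoc, ht1, hl1, Category.id_comp]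
    · rw [Category.assoc, ht2, hw, Category.id_comp]
  have htw : hP.lift l m₀ ht' ≫ (e₀ ≫ j₀) = 𝟙 Z := by
    rw [← cancel_mono m₀, Category.assoc, hw, ht2, Category.id_comp]
  have : IsIso (e₀ ≫ j₀) := ⟨hP.lift l m₀ ht', hwt, htw⟩
  have := h.precomp_iso_M (e₀ ≫ j₀) m₀ this hm₀
  rwa [hw] at this

theorem IsDFS.Comp_postcomp_iso {E J M : MorphismProperty C} (h : IsDFS E J M)
    {X Y Y' : C} {f : X ⟶ Y} (i : Y ⟶ Y') (hi : IsIso i) (hf : Comp J E f) :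
    Comp J E (f ≫ i) := by
  obtain ⟨Z, e, j, he, hj, rfl⟩ := hf
  refine ⟨Z, e, j ≫ i, he, ?_, (Category.assoc _ _ _).symm⟩
  have := h.comp_iso_J (𝟙 Z) j i inferInstance hi hj
  rwa [Category.id_comp] at this

theorem mp_ext {P Q : MorphismProperty C}
    (h1 : ∀ ⦃X Y : C⦄ (f : X ⟶ Y), P f → Q f)
    (h2 : ∀ ⦃X Y : C⦄ (f : X ⟶ Y), Q f → P f) : P = Q := by
  funext X Y f
  exact propext ⟨h1 f, h2 f⟩

/-- If `M₂ ⊆ M₁`, then `J₁·E₁ ⊆ J₂·E₂`. -/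
theorem JE_le_of_M_le {E₁ J₁ M₁ E₂ J₂ M₂ : MorphismProperty C}
    (h₁ : IsDFS E₁ J₁ M₁) (h₂ : IsDFS E₂ J₂ M₂)
    (hM : ∀ ⦃X Y : C⦄ (f : X ⟶ Y), M₂ f → M₁ f)
    {X Y : C} (f : X ⟶ Y) (hf : Comp J₁ E₁ f) : Comp J₂ E₂ f := by
  obtain ⟨Z₀, e₀, j₀, he₀, hj₀, rfl⟩ := hf
  obtain ⟨P, Q, e', j', m', he', hj', hm', hfac'⟩ := h₂.fac (e₀ ≫ j₀)
  have hw : (e' ≫ j') ≫ m' = e₀ ≫ j₀ := by rw [Category.assoc]; exact hfac'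
  obtain ⟨g, ⟨hg1, hg2⟩, -⟩ := (h₁.orth_JE_M he₀ hj₀ (hM m' hm')) (e' ≫ j') (𝟙 Y)
    (by rw [hw, Category.comp_id])
  obtain ⟨d, -, huniq⟩ := (h₂.orth_JE_M he' hj' hm') (e' ≫ j') m' rfl
  have hd1 : (𝟙 Q : Q ⟶ Q) = d := huniq _ ⟨Category.comp_id _, Category.id_comp _⟩
  have hd2 : m' ≫ g = d := by
    refine huniq _ ⟨?_, ?_⟩
    · rw [← Category.assoc, hw]; exact hg1
    · rw [Category.assoc, hg2, Category.comp_id]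
  have : IsIso m' := ⟨g, hd2.trans hd1.symm, hg2⟩
  have := h₂.Comp_postcomp_iso m' this ⟨P, e', j', he', hj', rfl⟩
  rwa [hw] at this

/-- If `J₂·E₂ ⊆ J₁·E₁`, then `M₁ ⊆ M₂`. -/
theorem M_le_of_JE_le {E₁ J₁ M₁ E₂ J₂ M₂ : MorphismProperty C}
    (h₁ : IsDFS E₁ J₁ M₁) (h₂ : IsDFS E₂ J₂ M₂) (hc₂ : IsCartesian E₂ J₂ M₂)
    (hJE : ∀ ⦃X Y : C⦄ (f : X ⟶ Y), Comp J₂ E₂ f → Comp J₁ E₁ f)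
    {X Y : C} (f : X ⟶ Y) (hf : M₁ f) : M₂ f := by
  obtain ⟨P, Q, e', j', m', he', hj', hm', hfac'⟩ := h₂.fac f
  have hw : (e' ≫ j') ≫ m' = f := by rw [Category.assoc]; exact hfac'
  have hwJE : Comp J₁ E₁ (e' ≫ j') := hJE _ ⟨P, e', j', he', hj', rfl⟩
  obtain ⟨g, ⟨hg1, hg2⟩, -⟩ := (h₁.orth_Comp hwJE hf) (𝟙 X) m'
    (by rw [Category.id_comp, hw])
  haveI : Mono m' := h₂.mono_of_M hc₂ hm'
  have hgw : g ≫ (e' ≫ j') = 𝟙 Q := by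
    rw [← cancel_mono m', Category.assoc, hw, hg2, Category.id_comp]
  have : IsIso (e' ≫ j') := ⟨g, hg1, hgw⟩
  have := h₂.precomp_iso_M (e' ≫ j') m' this hm'
  rwa [hw] at this

end AuxCat

section AuxTopos

variable {C : Type u} [Category.{v} C] [HasFiniteLimits C]

theorem classifies_precomp_iso {Ω : C} {tr : ⊤_ C ⟶ Ω} {U U' V : C} {n : U ⟶ V} {x : V ⟶ Ω}
    (i : U' ⟶ U) [IsIso i] (hn : Classifies Ω tr n x) : Classifies Ω tr (i ≫ n) x := by
  have hn' : IsPullback (terminal.from U) n tr x := hn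
  have top : IsPullback (terminal.from U') i (𝟙 (⊤_ C)) (terminal.from U) :=
    IsPullback.of_vert_isIso ⟨Subsingleton.elim _ _⟩
  have := top.paste_vert hn'
  rw [Category.id_comp] at this
  exact this

theorem classifies_id {Ω : C} (tr : ⊤_ C ⟶ Ω) (V : C) :
    Classifies Ω tr (𝟙 V) (terminal.from V ≫ tr) := by
  haveI : IsSplitMono tr := ⟨⟨terminal.from Ω, Subsingleton.elim _ _⟩⟩
  haveI : Mono tr := inferInstance
  have kp : IsPullback (𝟙 (⊤_ C)) (𝟙 (⊤_ C)) tr tr := IsKernelPair.id_of_mono tr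
  have left : IsPullback (terminal.from V) (𝟙 V) (𝟙 (⊤_ C)) (terminal.from V) :=
    IsPullback.of_vert_isIso ⟨Subsingleton.elim _ _⟩
  have := left.paste_horiz kp
  rw [Category.comp_id] at this
  exact this

/-- The closure factorization: any classified mono `n` factors as a `J·E`-morphism
followed by an `M`-morphism classified by `d ≫ k`. -/
theorem closure_fac {Ω : C} {tr : ⊤_ C ⟶ Ω}
    {E J M : MorphismProperty C} (h : IsDFS E J M) (hc : IsCartesian E J M)
    {A B : C} {e : ⊤_ C ⟶ A} {j : A ⟶ B} {m : B ⟶ Ω}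
    (he : E e) (hj : J j) (hm : M m) (hfac : e ≫ j ≫ m = tr)
    {k : Ω ⟶ Ω} (hk : Classifies Ω tr m k)
    {U V : C} {n : U ⟶ V} {d : V ⟶ Ω} (hn : Classifies Ω tr n d) :
    ∃ (W : C) (q : U ⟶ W) (nb : W ⟶ V), Comp J E q ∧ M nb ∧ q ≫ nb = n ∧
      Classifies Ω tr nb (d ≫ k) := by
  have hn' : IsPullback (terminal.from U) n tr d := hn
  have hk' : IsPullback (terminal.from B) m tr k := hk
  have hw : (e ≫ j) ≫ m = tr := by rw [Category.assoc]; exact hfac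
  have hPB : IsPullback (pullback.fst m d) (pullback.snd m d) m d :=
    IsPullback.of_hasPullback m d
  have hMnb : M (pullback.snd m d) :=
    h.M_stable hc m d (pullback.snd m d) (pullback.fst m d) hPB hm
  have hq' : (terminal.from U ≫ (e ≫ j)) ≫ m = n ≫ d := by
    rw [Category.assoc, hw, hn'.w]
  have hq1 : pullback.lift (terminal.from U ≫ (e ≫ j)) n hq' ≫ pullback.fst m d
      = terminal.from U ≫ (e ≫ j) := pullback.lift_fst _ _ hq'
  have hq2 : pullback.lift (terminal.from U ≫ (e ≫ j)) n hq' ≫ pullback.snd m d = n :=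
    pullback.lift_snd _ _ hq'
  have big : IsPullback (terminal.from U)
      (pullback.lift (terminal.from U ≫ (e ≫ j)) n hq' ≫ pullback.snd m d)
      ((e ≫ j) ≫ m) d := by
    rw [hq2, hw]; exact hn'
  have topsq : IsPullback (terminal.from U)
      (pullback.lift (terminal.from U ≫ (e ≫ j)) n hq') (e ≫ j) (pullback.fst m d) :=
    IsPullback.of_bot big hq1.symm hPB
  have hqJE : Comp J E (pullback.lift (terminal.from U ≫ (e ≫ j)) n hq') :=
    hc.2.1 (e ≫ j) (pullback.fst m d) _ (terminal.from U) topsq ⟨A, e, j, he, hj, rfl⟩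
  have hcnb : Classifies Ω tr (pullback.snd m d) (d ≫ k) := by
    have := hPB.paste_horiz hk'
    have hpt : pullback.fst m d ≫ terminal.from B = terminal.from (pullback m d) :=
      Subsingleton.elim _ _
    rwa [hpt] at this
  exact ⟨pullback m d, _, pullback.snd m d, hqJE, hMnb, hq2, hcnb⟩

/-- A mono in `J·E` is dense for the associated topology. -/
theorem dense_of_JE {Ω : C} {tr : ⊤_ C ⟶ Ω} (hΩ : IsClassifier Ω tr)
    {E J M : MorphismProperty C} (h : IsDFS E J M) (hc : IsCartesian E J M)
    {A B : C} {e : ⊤_ C ⟶ A} {j : A ⟶ B} {m : B ⟶ Ω}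
    (he : E e) (hj : J j) (hm : M m) (hfac : e ≫ j ≫ m = tr)
    {k : Ω ⟶ Ω} (hk : Classifies Ω tr m k)
    {U V : C} {n : U ⟶ V} {d : V ⟶ Ω} (hn : Classifies Ω tr n d)
    (hnJE : Comp J E n) : d ≫ k = terminal.from V ≫ tr := by
  obtain ⟨W, q, nb, hqJE, hMnb, hq2, hcnb⟩ := closure_fac h hc he hj hm hfac hk hn
  obtain ⟨g, ⟨hg1, hg2⟩, -⟩ := (h.orth_Comp hnJE hMnb) q (𝟙 V)
    (by rw [hq2, Category.comp_id])
  haveI hnbmono : Mono nb := h.mono_of_M hc hMnb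
  have hnbg : nb ≫ g = 𝟙 W := by
    rw [← cancel_mono nb, Category.assoc, hg2, Category.id_comp, Category.comp_id]
  haveI : IsIso nb := ⟨g, hnbg, hg2⟩
  have hcid : Classifies Ω tr (𝟙 V) (d ≫ k) := by
    have := classifies_precomp_iso (inv nb) hcnb
    rwa [IsIso.inv_hom_id] at this
  exact (hΩ (𝟙 V) inferInstance).unique hcid (classifies_id tr V)

/-- A dense mono belongs to `J·E`. -/
theorem JE_of_dense {Ω : C} {tr : ⊤_ C ⟶ Ω}
    {E J M : MorphismProperty C} (h : IsDFS E J M) (hc : IsCartesian E J M)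
    {A B : C} {e : ⊤_ C ⟶ A} {j : A ⟶ B} {m : B ⟶ Ω}
    (he : E e) (hj : J j) (hm : M m) (hfac : e ≫ j ≫ m = tr)
    {k : Ω ⟶ Ω} (hk : Classifies Ω tr m k)
    {U V : C} {n : U ⟶ V} {d : V ⟶ Ω} (hn : Classifies Ω tr n d)
    (hdense : d ≫ k = terminal.from V ≫ tr) : Comp J E n := by
  obtain ⟨W, q, nb, hqJE, hMnb, hq2, hcnb⟩ := closure_fac h hc he hj hm hfac hk hn
  rw [hdense] at hcnb
  have hcnb' : IsPullback (terminal.from W) nb tr (terminal.from V ≫ tr) := hcnb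
  have hcid' : IsPullback (terminal.from V) (𝟙 V) tr (terminal.from V ≫ tr) :=
    classifies_id tr V
  have hiso : IsIso nb := by
    have h1 := hcnb'.isoIsPullback_hom_snd _ _ hcid'
    have : nb = (hcnb'.isoIsPullback _ _ hcid').hom :=
      h1.symm.trans (Category.comp_id _)
    rw [this]; infer_instance
  have := h.Comp_postcomp_iso nb hiso hqJE
  rwa [hq2] at this

/-- If the topologies agree, `M₁ ⊆ M₂`. -/
theorem M_le_of_k_eq {Ω : C} {tr : ⊤_ C ⟶ Ω} (hΩ : IsClassifier Ω tr)
    {E₁ J₁ M₁ E₂ J₂ M₂ : MorphismProperty C}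
    (h₁ : IsDFS E₁ J₁ M₁) (hc₁ : IsCartesian E₁ J₁ M₁)
    (h₂ : IsDFS E₂ J₂ M₂) (hc₂ : IsCartesian E₂ J₂ M₂)
    {A₁ B₁ : C} {e₁ : ⊤_ C ⟶ A₁} {j₁ : A₁ ⟶ B₁} {m₁ : B₁ ⟶ Ω}
    (he₁ : E₁ e₁) (hj₁ : J₁ j₁) (hm₁ : M₁ m₁) (hfac₁ : e₁ ≫ j₁ ≫ m₁ = tr)
    {k₁ : Ω ⟶ Ω} (hk₁ : Classifies Ω tr m₁ k₁)
    {A₂ B₂ : C} {e₂ : ⊤_ C ⟶ A₂} {j₂ : A₂ ⟶ B₂} {m₂ : B₂ ⟶ Ω}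
    (he₂ : E₂ e₂) (hj₂ : J₂ j₂) (hm₂ : M₂ m₂) (hfac₂ : e₂ ≫ j₂ ≫ m₂ = tr)
    {k₂ : Ω ⟶ Ω} (hk₂ : Classifies Ω tr m₂ k₂)
    (hk : k₁ = k₂) {X Y : C} (f : X ⟶ Y) (hf : M₁ f) : M₂ f := by
  obtain ⟨P, Q, e', j', m', he', hj', hm', hfac'⟩ := h₂.fac f
  have hw : (e' ≫ j') ≫ m' = f := by rw [Category.assoc]; exact hfac'
  haveI hfm : Mono f := h₁.mono_of_M hc₁ hf
  haveI : Mono ((e' ≫ j') ≫ m') := by rwa [hw]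
  haveI hwm : Mono (e' ≫ j') := mono_of_mono (e' ≫ j') m'
  obtain ⟨d, hd, -⟩ := hΩ (e' ≫ j') hwm
  have hdense : d ≫ k₂ = terminal.from Q ≫ tr :=
    dense_of_JE hΩ h₂ hc₂ he₂ hj₂ hm₂ hfac₂ hk₂ hd ⟨P, e', j', he', hj', rfl⟩
  rw [← hk] at hdense
  have hJE1 : Comp J₁ E₁ (e' ≫ j') :=
    JE_of_dense h₁ hc₁ he₁ hj₁ hm₁ hfac₁ hk₁ hd hdense
  obtain ⟨g, ⟨hg1, hg2⟩, -⟩ := (h₁.orth_Comp hJE1 hf) (𝟙 X) m'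
    (by rw [Category.id_comp, hw])
  haveI : Mono m' := h₂.mono_of_M hc₂ hm'
  have hgw : g ≫ (e' ≫ j') = 𝟙 Q := by
    rw [← cancel_mono m', Category.assoc, hw, hg2, Category.id_comp]
  have : IsIso (e' ≫ j') := ⟨g, hg1, hgw⟩
  have := h₂.precomp_iso_M (e' ≫ j') m' this hm'
  rwa [hw] at this

/-- If `M₁ = M₂` then the topologies agree. -/
theorem k_eq_of_M_eq {Ω : C} {tr : ⊤_ C ⟶ Ω} (hΩ : IsClassifier Ω tr)
    {E₁ J₁ M₁ E₂ J₂ M₂ : MorphismProperty C}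
    (h₁ : IsDFS E₁ J₁ M₁) (hc₁ : IsCartesian E₁ J₁ M₁)
    (h₂ : IsDFS E₂ J₂ M₂) (hc₂ : IsCartesian E₂ J₂ M₂)
    {A₁ B₁ : C} {e₁ : ⊤_ C ⟶ A₁} {j₁ : A₁ ⟶ B₁} {m₁ : B₁ ⟶ Ω}
    (he₁ : E₁ e₁) (hj₁ : J₁ j₁) (hm₁ : M₁ m₁) (hfac₁ : e₁ ≫ j₁ ≫ m₁ = tr)
    {k₁ : Ω ⟶ Ω} (hk₁ : Classifies Ω tr m₁ k₁)
    {A₂ B₂ : C} {e₂ : ⊤_ C ⟶ A₂} {j₂ : A₂ ⟶ B₂} {m₂ : B₂ ⟶ Ω}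
    (he₂ : E₂ e₂) (hj₂ : J₂ j₂) (hm₂ : M₂ m₂) (hfac₂ : e₂ ≫ j₂ ≫ m₂ = tr)
    {k₂ : Ω ⟶ Ω} (hk₂ : Classifies Ω tr m₂ k₂)
    (hM : M₁ = M₂) : k₁ = k₂ := by
  have hm₂' : M₁ m₂ := by rw [hM]; exact hm₂
  have hm₁' : M₂ m₁ := by rw [← hM]; exact hm₁
  have hw₁ : (e₁ ≫ j₁) ≫ m₁ = tr := by rw [Category.assoc]; exact hfac₁
  have hw₂ : (e₂ ≫ j₂) ≫ m₂ = tr := by rw [Category.assoc]; exact hfac₂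
  obtain ⟨θ, ⟨hθ1, hθ2⟩, -⟩ := (h₁.orth_JE_M he₁ hj₁ hm₂') (e₂ ≫ j₂) m₁
    (by rw [hw₂, hw₁])
  obtain ⟨θ', ⟨hθ'1, hθ'2⟩, -⟩ := (h₂.orth_JE_M he₂ hj₂ hm₁') (e₁ ≫ j₁) m₂
    (by rw [hw₁, hw₂])
  haveI hmm₁ : Mono m₁ := h₁.mono_of_M hc₁ hm₁
  haveI hmm₂ : Mono m₂ := h₂.mono_of_M hc₂ hm₂
  have hθθ' : θ ≫ θ' = 𝟙 B₁ := by
    rw [← cancel_mono m₁, Category.assoc, hθ'2, hθ2, Category.id_comp]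
  have hθ'θ : θ' ≫ θ = 𝟙 B₂ := by
    rw [← cancel_mono m₂, Category.assoc, hθ2, hθ'2, Category.id_comp]
  haveI : IsIso θ := ⟨θ', hθθ', hθ'θ⟩
  have hcm₁ : Classifies Ω tr m₁ k₂ := by
    have := classifies_precomp_iso θ hk₂
    rwa [hθ2] at this
  exact (hΩ m₁ hmm₁).unique hk₁ hcm₁

end AuxTopos

end DFS



/-- Let `(E₁, J₁, M₁)` and `(E₂, J₂, M₂)` be cartesian dfs's on a
topos `C` generating Lawvere–Tierney topologies `k₁`, `k₂` (the characteristic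
morphisms of the `M`-parts of the factorizations of `true`).  Then `k₁ = k₂` iff
`J₁·E₁ = J₂·E₂`, and also `k₁ = k₂` iff `M₁ = M₂`. -/
theorem statement13 {C : Type u} [Category.{v} C] [HasFiniteLimits C]
    [CartesianMonoidalCategory C] [MonoidalClosed C]
    (Ω : C) (tr : ⊤_ C ⟶ Ω) (hΩ : DFS.IsClassifier Ω tr)
    (E₁ J₁ M₁ : MorphismProperty C) (h₁ : DFS.IsDFS E₁ J₁ M₁)
    (hc₁ : DFS.IsCartesian E₁ J₁ M₁)
    (E₂ J₂ M₂ : MorphismProperty C) (h₂ : DFS.IsDFS E₂ J₂ M₂)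
    (hc₂ : DFS.IsCartesian E₂ J₂ M₂)
    (A₁ B₁ : C) (e₁ : ⊤_ C ⟶ A₁) (j₁ : A₁ ⟶ B₁) (m₁ : B₁ ⟶ Ω)
    (he₁ : E₁ e₁) (hj₁ : J₁ j₁) (hm₁ : M₁ m₁) (hfac₁ : e₁ ≫ j₁ ≫ m₁ = tr)
    (k₁ : Ω ⟶ Ω) (hk₁ : DFS.Classifies Ω tr m₁ k₁)
    (A₂ B₂ : C) (e₂ : ⊤_ C ⟶ A₂) (j₂ : A₂ ⟶ B₂) (m₂ : B₂ ⟶ Ω)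
    (he₂ : E₂ e₂) (hj₂ : J₂ j₂) (hm₂ : M₂ m₂) (hfac₂ : e₂ ≫ j₂ ≫ m₂ = tr)
    (k₂ : Ω ⟶ Ω) (hk₂ : DFS.Classifies Ω tr m₂ k₂) :
    (k₁ = k₂ ↔ DFS.Comp J₁ E₁ = DFS.Comp J₂ E₂) ∧
    (k₁ = k₂ ↔ M₁ = M₂) := by
  have KtoM : k₁ = k₂ → M₁ = M₂ := fun hk =>
    DFS.mp_ext
      (fun X Y f hf => DFS.M_le_of_k_eq hΩ h₁ hc₁ h₂ hc₂ he₁ hj₁ hm₁ hfac₁ hk₁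
        he₂ hj₂ hm₂ hfac₂ hk₂ hk f hf)
      (fun X Y f hf => DFS.M_le_of_k_eq hΩ h₂ hc₂ h₁ hc₁ he₂ hj₂ hm₂ hfac₂ hk₂
        he₁ hj₁ hm₁ hfac₁ hk₁ hk.symm f hf)
  have MtoK : M₁ = M₂ → k₁ = k₂ := fun hM =>
    DFS.k_eq_of_M_eq hΩ h₁ hc₁ h₂ hc₂ he₁ hj₁ hm₁ hfac₁ hk₁ he₂ hj₂ hm₂ hfac₂ hk₂ hM
  have MtoJE : M₁ = M₂ → DFS.Comp J₁ E₁ = DFS.Comp J₂ E₂ := fun hM =>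
    DFS.mp_ext
      (fun X Y f hf => DFS.JE_le_of_M_le h₁ h₂
        (fun X Y g hg => by rw [hM]; exact hg) f hf)
      (fun X Y f hf => DFS.JE_le_of_M_le h₂ h₁
        (fun X Y g hg => by rw [← hM]; exact hg) f hf)
  have JEtoM : DFS.Comp J₁ E₁ = DFS.Comp J₂ E₂ → M₁ = M₂ := fun hJE =>
    DFS.mp_ext
      (fun X Y f hf => DFS.M_le_of_JE_le h₁ h₂ hc₂
        (fun X Y g hg => by rw [hJE]; exact hg) f hf)
      (fun X Y f hf => DFS.M_le_of_JE_le h₂ h₁ hc₁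
        (fun X Y g hg => by rw [← hJE]; exact hg) f hf)
  exact ⟨⟨fun hk => MtoJE (KtoM hk), fun hJE => MtoK (JEtoM hJE)⟩, ⟨KtoM, MtoK⟩⟩
end

section
/- Let (E1, J1, M1) and (E2, J2, M2) be cartesian double factorization systems on toposes C1 and C2 respectively, generating Lawvere–Tierney topologies k1 and k2, and let F ⊣ G with F : C1 → C2 be a Quillen adjunction. If F preserves finite limits, then G maps k2-sheaves to k1-sheaves and maps k2-separating objects to k1-separating objects. -/
open CategoryTheory CategoryTheory.Limits

universe v u v₂ u₂

section AuxLemmas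

variable {C : Type*} [Category C] [HasFiniteLimits C]

/-- If `m` is a mono lying in `J·E`, then `m` is `k`-dense. -/
theorem aux_dense_of_comp
    (Ω : C) (tr : ⊤_ C ⟶ Ω) (hΩ : DFS.IsClassifier Ω tr)
    {E J M : MorphismProperty C} (h : DFS.IsDFS E J M)
    {A₁ B₁ : C} (e₁ : ⊤_ C ⟶ A₁) (j₁ : A₁ ⟶ B₁) (m₁ : B₁ ⟶ Ω)
    (hj₁ : J j₁) (hm₁ : M m₁) (hfac : e₁ ≫ j₁ ≫ m₁ = tr)
    (k : Ω ⟶ Ω) (hk : DFS.Classifies Ω tr m₁ k)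
    {A B : C} (m : A ⟶ B) (hmono : Mono m) (hJE : DFS.Comp J E m) :
    DFS.IsDense Ω tr k m := by
  obtain ⟨c, hc, -⟩ := hΩ m hmono
  obtain ⟨Z, e, j, he, hj, hej⟩ := hJE
  have sq : e ≫ j ≫ c = (terminal.from A ≫ e₁) ≫ j₁ ≫ m₁ := by
    rw [← Category.assoc e j c, hej, ← hc.w, Category.assoc, hfac]
  obtain ⟨st, ⟨-, -, h3⟩, -⟩ := h.lift e j j₁ m₁ (terminal.from A ≫ e₁) c he hj hj₁ hm₁ sq
  refine ⟨c, hc, ?_⟩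
  calc c ≫ k = st.2 ≫ m₁ ≫ k := by rw [← h3, Category.assoc]
    _ = st.2 ≫ terminal.from B₁ ≫ tr := by rw [← hk.w]
    _ = terminal.from B ≫ tr := by
        rw [← Category.assoc]
        congr 1
        exact terminal.hom_ext _ _

/-- The trivial classifying square of the identity. -/
theorem aux_id_isPullback (Ω : C) (tr : ⊤_ C ⟶ Ω) (B : C) :
    IsPullback (terminal.from B) (𝟙 B) tr (terminal.from B ≫ tr) :=
  IsPullback.of_isLimit (PullbackCone.IsLimit.mk
    (by rw [Category.id_comp]; exact (terminal.hom_ext (terminal.from B) _) ▸ rfl)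
    (fun s => s.snd)
    (fun s => terminal.hom_ext _ _)
    (fun s => Category.comp_id _)
    (fun s mm h1 h2 => by simpa using h2))

/-- A `k`-dense morphism lies in `J·E`. -/
theorem aux_comp_of_dense
    {E J M : MorphismProperty C} (h : DFS.IsDFS E J M) (hcart : DFS.IsCartesian E J M)
    (Ω : C) (tr : ⊤_ C ⟶ Ω)
    {A₁ B₁ : C} (e₁ : ⊤_ C ⟶ A₁) (j₁ : A₁ ⟶ B₁) (m₁ : B₁ ⟶ Ω)
    (he₁ : E e₁) (hj₁ : J j₁) (hfac : e₁ ≫ j₁ ≫ m₁ = tr)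
    (k : Ω ⟶ Ω) (hk : DFS.Classifies Ω tr m₁ k)
    {A B : C} (m : A ⟶ B) (hd : DFS.IsDense Ω tr k m) :
    DFS.Comp J E m := by
  obtain ⟨c, hc, hck⟩ := hd
  have pb := IsPullback.of_hasPullback m₁ c
  -- the pasted square: `pullback.snd m₁ c` is classified by `c ≫ k`
  have big : IsPullback (pullback.fst m₁ c ≫ terminal.from B₁) (pullback.snd m₁ c) tr
      (c ≫ k) := pb.paste_horiz hk
  rw [hck] at big
  -- hence `pullback.snd m₁ c` is an isomorphism
  have hsnd : (big.isoIsPullback (⊤_ C) B (aux_id_isPullback Ω tr B)).hom = pullback.snd m₁ c := by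
    have := big.isoIsPullback_hom_snd (⊤_ C) B (aux_id_isPullback Ω tr B)
    simpa using this
  have hsndiso : IsIso (pullback.snd m₁ c) := by rw [← hsnd]; infer_instance
  -- the comparison map `l : A ⟶ pullback m₁ c`
  have wl : (terminal.from A ≫ e₁ ≫ j₁) ≫ m₁ = m ≫ c := by
    rw [Category.assoc, Category.assoc, hfac]; exact hc.w
  set l : A ⟶ pullback m₁ c := pullback.lift _ m wl with hl
  have hlsnd : l ≫ pullback.snd m₁ c = m := pullback.lift_snd _ _ _
  have hlfst : l ≫ pullback.fst m₁ c = terminal.from A ≫ e₁ ≫ j₁ := pullback.lift_fst _ _ _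
  -- `l` is the pullback of `e₁ ≫ j₁` along `pullback.fst m₁ c`
  have hbig2 : IsPullback (terminal.from A) (l ≫ pullback.snd m₁ c) ((e₁ ≫ j₁) ≫ m₁) c := by
    rw [hlsnd, Category.assoc, hfac]; exact hc
  have left : IsPullback (terminal.from A) l (e₁ ≫ j₁) (pullback.fst m₁ c) :=
    hbig2.of_bot (by rw [hlfst]) pb
  have hlJE : DFS.Comp J E l :=
    hcart.2.1 (e₁ ≫ j₁) (pullback.fst m₁ c) l (terminal.from A) left ⟨A₁, e₁, j₁, he₁, hj₁, rfl⟩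
  obtain ⟨Z, e, j, he, hj, hej⟩ := hlJE
  refine ⟨Z, e, j ≫ pullback.snd m₁ c, he, ?_, ?_⟩
  · have := h.comp_iso_J (𝟙 Z) j (pullback.snd m₁ c) inferInstance hsndiso hj
    simpa using this
  · rw [← Category.assoc, hej, hlsnd]

end AuxLemmas

/-- Let `(E₁, J₁, M₁)`, `(E₂, J₂, M₂)` be cartesian dfs's on toposes
`C₁`, `C₂` generating LT-topologies `k₁`, `k₂`, and let `F ⊣ G` be a Quillen
adjunction whose left adjoint preserves finite limits (a geometric morphism).
Then `G` maps `k₂`-sheaves to `k₁`-sheaves and `k₂`-separating objects to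
`k₁`-separating objects. -/
theorem statement14 {C₁ : Type u} [Category.{v} C₁] [HasFiniteLimits C₁]
    [CartesianMonoidalCategory C₁] [MonoidalClosed C₁]
    {C₂ : Type u₂} [Category.{v₂} C₂] [HasFiniteLimits C₂]
    [CartesianMonoidalCategory C₂] [MonoidalClosed C₂]
    (Ω₁ : C₁) (tr₁ : ⊤_ C₁ ⟶ Ω₁) (hΩ₁ : DFS.IsClassifier Ω₁ tr₁)
    (Ω₂ : C₂) (tr₂ : ⊤_ C₂ ⟶ Ω₂) (hΩ₂ : DFS.IsClassifier Ω₂ tr₂)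
    (E₁ J₁ M₁ : MorphismProperty C₁) (h₁ : DFS.IsDFS E₁ J₁ M₁)
    (hc₁ : DFS.IsCartesian E₁ J₁ M₁)
    (E₂ J₂ M₂ : MorphismProperty C₂) (h₂ : DFS.IsDFS E₂ J₂ M₂)
    (hc₂ : DFS.IsCartesian E₂ J₂ M₂)
    (A₁ B₁ : C₁) (e₁ : ⊤_ C₁ ⟶ A₁) (j₁ : A₁ ⟶ B₁) (m₁ : B₁ ⟶ Ω₁)
    (he₁ : E₁ e₁) (hj₁ : J₁ j₁) (hm₁ : M₁ m₁) (hfac₁ : e₁ ≫ j₁ ≫ m₁ = tr₁)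
    (k₁ : Ω₁ ⟶ Ω₁) (hk₁ : DFS.Classifies Ω₁ tr₁ m₁ k₁)
    (A₂ B₂ : C₂) (e₂ : ⊤_ C₂ ⟶ A₂) (j₂ : A₂ ⟶ B₂) (m₂ : B₂ ⟶ Ω₂)
    (he₂ : E₂ e₂) (hj₂ : J₂ j₂) (hm₂ : M₂ m₂) (hfac₂ : e₂ ≫ j₂ ≫ m₂ = tr₂)
    (k₂ : Ω₂ ⟶ Ω₂) (hk₂ : DFS.Classifies Ω₂ tr₂ m₂ k₂)
    (F : C₁ ⥤ C₂) (G : C₂ ⥤ C₁) (adj : F ⊣ G)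
    (hQuillen : DFS.LeftQuillen E₁ J₁ E₂ J₂ F) [PreservesFiniteLimits F] :
    (∀ X : C₂, DFS.IsSheaf Ω₂ tr₂ k₂ X → DFS.IsSheaf Ω₁ tr₁ k₁ (G.obj X)) ∧
    (∀ X : C₂, DFS.IsSepObj Ω₂ tr₂ k₂ X → DFS.IsSepObj Ω₁ tr₁ k₁ (G.obj X)) := by
  -- `F` maps `k₁`-dense monos to `k₂`-dense monos
  have transfer : ∀ {A B : C₁} (m : A ⟶ B), Mono m → DFS.IsDense Ω₁ tr₁ k₁ m →
      Mono (F.map m) ∧ DFS.IsDense Ω₂ tr₂ k₂ (F.map m) := by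
    intro A B m hmono hd
    have hJE : DFS.Comp J₁ E₁ m :=
      aux_comp_of_dense h₁ hc₁ Ω₁ tr₁ e₁ j₁ m₁ he₁ hj₁ hfac₁ k₁ hk₁ m hd
    have hFm : Mono (F.map m) := inferInstance
    exact ⟨hFm, aux_dense_of_comp Ω₂ tr₂ hΩ₂ h₂ e₂ j₂ m₂ hj₂ hm₂ hfac₂ k₂ hk₂ (F.map m) hFm
      (hQuillen.2 m hJE)⟩
  -- precomposition with `m` corresponds to precomposition with `F.map m` via the adjunction
  have homeq : ∀ (X : C₂) {A B : C₁} (m : A ⟶ B),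
      (fun g : B ⟶ G.obj X => m ≫ g) =
      (adj.homEquiv A X) ∘ (fun g' : F.obj B ⟶ X => F.map m ≫ g') ∘ (adj.homEquiv B X).symm := by
    intro X A B m
    funext g
    show m ≫ g = (adj.homEquiv A X) (F.map m ≫ (adj.homEquiv B X).symm g)
    rw [adj.homEquiv_naturality_left, Equiv.apply_symm_apply]
  constructor
  · intro X hX A B m hmono hd
    obtain ⟨hFm, hFd⟩ := transfer m hmono hd
    rw [homeq X m]
    exact (adj.homEquiv A X).bijective.comp
      ((hX (F.map m) hFm hFd).comp (adj.homEquiv B X).symm.bijective)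
  · intro X hX A B m hmono hd
    obtain ⟨hFm, hFd⟩ := transfer m hmono hd
    rw [homeq X m]
    exact ((adj.homEquiv A X).injective.comp
      ((hX (F.map m) hFm hFd).comp (adj.homEquiv B X).symm.injective))
end

section
/- Let C be a topos equipped with a cartesian double factorization system (E, J, M) generating a Lawvere–Tierney topology k, and let G = (G, ε, δ) be a cartesian comonad on C such that G is (k, k)-continuous, G(M) ⊆ M and G(J) ⊆ J. Then the Lawvere–Tierney topology k_G on the topos of G-coalgebras C_G generated by the left-induced cartesian dfs (E_G, J_G, M_G) (the preimages of E, J, M under the forgetful functor) equals the extension k̃ of k, i.e. k_G = k̃, where k̃ is the unique coalgebra morphism satisfying m_G ∘ k̃ = G(k) ∘ m_G for the equalizer m_G : Ω_G → GΩ of 1_{GΩ} and G(char(G(true)))∘δ_Ω. -/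
open CategoryTheory CategoryTheory.Limits

universe v u v₂ u₂

namespace DFS

/-- The preimage of a class of morphisms under the forgetful functor from
Eilenberg–Moore coalgebras. -/
def coalgPre {C : Type u} [Category.{v} C] (G : Comonad C) (P : MorphismProperty C) :
    MorphismProperty G.Coalgebra :=
  fun _ _ f => P f.f

end DFS

namespace Statement17Aux

open CategoryTheory CategoryTheory.Limits

variable {D : Type*} [Category D]

lemma mono_snd_of_isPullback {P X Y Z : D} {fst : P ⟶ X} {snd : P ⟶ Y} {f : X ⟶ Z} {g : Y ⟶ Z}
    (hpb : IsPullback fst snd f g) (hf : Mono f) : Mono snd := by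
  constructor
  intro W a b hab
  have h1 : (a ≫ fst) ≫ f = (b ≫ fst) ≫ f := by
    rw [Category.assoc, Category.assoc, hpb.w, ← Category.assoc, ← Category.assoc, hab]
  exact hpb.hom_ext ((cancel_mono f).mp h1) hab

lemma mono_of_terminal_from [HasTerminal D] {X : D} (f : ⊤_ D ⟶ X) : Mono f := by
  constructor
  intro W a b hab
  have hf : f ≫ terminal.from X = 𝟙 _ := terminal.hom_ext _ _
  calc a = a ≫ (f ≫ terminal.from X) := by rw [hf, Category.comp_id]
    _ = (a ≫ f) ≫ terminal.from X := by rw [Category.assoc]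
    _ = (b ≫ f) ≫ terminal.from X := by rw [hab]
    _ = b ≫ (f ≫ terminal.from X) := by rw [Category.assoc]
    _ = b := by rw [hf, Category.comp_id]

lemma mono_of_kernel_pair {P X Y : D} {k₁ k₂ : P ⟶ X} {f : X ⟶ Y}
    (hpb : IsPullback k₁ k₂ f f) (he : k₁ = k₂) : Mono f := by
  constructor
  intro W a b hab
  have h1 := hpb.lift_fst a b hab
  have h2 := hpb.lift_snd a b hab
  calc a = hpb.lift a b hab ≫ k₁ := h1.symm
    _ = hpb.lift a b hab ≫ k₂ := congrArg (fun q => hpb.lift a b hab ≫ q) he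
    _ = b := h2

lemma map_mono_of_preserves {D' : Type*} [Category D'] (F : D ⥤ D') {X Y : D} (f : X ⟶ Y)
    [PreservesLimit (cospan f f) F] (hf : Mono f) : Mono (F.map f) := by
  haveI := hf
  have h2 : IsPullback (𝟙 X) (𝟙 X) f f := IsKernelPair.id_of_mono f
  have h3 := h2.map F
  rw [F.map_id] at h3
  exact mono_of_kernel_pair h3 rfl

lemma pb_id_of_mono {X Y Z : D} (g : X ⟶ Y) (w : Y ⟶ Z) (hw : Mono w) :
    IsPullback g (𝟙 X) w (g ≫ w) := by
  refine IsPullback.of_isLimit (PullbackCone.IsLimit.mk (by rw [Category.id_comp])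
    (fun s => s.snd) (fun s => ?_) (fun s => Category.comp_id _) (fun s mm h1 h2 => ?_)
    )
  · haveI := hw
    have := s.condition
    rw [← Category.assoc] at this
    exact ((cancel_mono w).mp this).symm
  · show mm = s.snd
    rw [← h2, Category.comp_id]

end Statement17Aux

open Statement17Aux

/-- Let `C` be a topos with a cartesian dfs `(E, J, M)` generating a
Lawvere–Tierney topology `k`, and `G` a cartesian comonad which is `(k,k)`-continuous
and preserves trivial fibrations (`G(M) ⊆ M`) and bifibrant morphisms (`G(J) ⊆ J`).
Then the LT-topology `k_G` on the topos of `G`-coalgebras generated by the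
left-induced cartesian dfs `(E_G, J_G, M_G)` equals the extension `k̃` of `k`, the
unique coalgebra morphism with `m_G ∘ k̃ = G(k) ∘ m_G`. -/
theorem statement17 {C : Type u} [Category.{v} C] [HasFiniteLimits C]
    [CartesianMonoidalCategory C] [MonoidalClosed C]
    (Ω : C) (tr : ⊤_ C ⟶ Ω) (hΩ : DFS.IsClassifier Ω tr)
    (E J M : MorphismProperty C) (h : DFS.IsDFS E J M) (hc : DFS.IsCartesian E J M)
    -- the LT-topology `k` generated by `(E, J, M)`
    (A B : C) (e : ⊤_ C ⟶ A) (j : A ⟶ B) (m : B ⟶ Ω)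
    (he : E e) (hj : J j) (hm : M m) (hfac : e ≫ j ≫ m = tr)
    (k : Ω ⟶ Ω) (hk : DFS.Classifies Ω tr m k)
    (G : Comonad C) [PreservesFiniteLimits G.toFunctor]
    (hM : ∀ ⦃X Y : C⦄ (f : X ⟶ Y), M f → M (G.toFunctor.map f))
    (hJ : ∀ ⦃X Y : C⦄ (f : X ⟶ Y), J f → J (G.toFunctor.map f))
    -- `G` is `(k, k)`-continuous
    (hcont : ∀ ⦃X Y X' : C⦄ (n : X ⟶ Y) (n₁ : X' ⟶ Y), Mono n →
      DFS.IsClosureOf Ω tr k n n₁ →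
      ∀ ⦃X'' : C⦄ (n₂ : X'' ⟶ G.toFunctor.obj Y),
        DFS.IsClosureOf Ω tr k (G.toFunctor.map n) n₂ →
        ∃ φ : G.toFunctor.obj X' ⟶ X'', φ ≫ n₂ = G.toFunctor.map n₁)
    -- `τ = char (G true)`
    (τ : G.toFunctor.obj Ω ⟶ Ω) (hτ : DFS.Classifies Ω tr (G.toFunctor.map tr) τ)
    -- the subobject classifier of the topos of coalgebras
    [HasFiniteLimits G.Coalgebra]
    (ΩG : G.Coalgebra) (mG : ΩG.A ⟶ G.toFunctor.obj Ω)
    (hw : mG ≫ 𝟙 (G.toFunctor.obj Ω) = mG ≫ (G.δ.app Ω ≫ G.toFunctor.map τ))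
    (hlim : Nonempty (IsLimit (Fork.ofι mG hw)))
    (hcoalg : ΩG.a ≫ G.toFunctor.map mG = mG ≫ G.δ.app Ω)
    (trueG : ⊤_ (G.Coalgebra) ⟶ ΩG)
    (htrueG : G.forget.map trueG ≫ mG =
      (⊤_ (G.Coalgebra)).a ≫
        G.toFunctor.map (terminal.from (⊤_ (G.Coalgebra)).A) ≫ G.toFunctor.map tr)
    (hclG : DFS.IsClassifier ΩG trueG)
    -- the LT-topology `k_G` generated by the left-induced dfs `(E_G, J_G, M_G)`
    (AG BG : G.Coalgebra) (eG : ⊤_ (G.Coalgebra) ⟶ AG) (jG : AG ⟶ BG) (mG' : BG ⟶ ΩG)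
    (heG : DFS.coalgPre G E eG) (hjG : DFS.coalgPre G J jG)
    (hmG : DFS.coalgPre G M mG') (hfacG : eG ≫ jG ≫ mG' = trueG)
    (kG : ΩG ⟶ ΩG) (hkG : DFS.Classifies ΩG trueG mG' kG)
    -- the extension `k̃` of `k`
    (kt : ΩG ⟶ ΩG) (hkt : G.forget.map kt ≫ mG = mG ≫ G.toFunctor.map k) :
    kG = kt := by
  classical
  obtain ⟨hlim⟩ := hlim
  -- `mG` is a monomorphism (it is an equalizer)
  haveI monoMG : Mono mG := by
    have := mono_of_isLimit_fork hlim
    simpa using this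
  -- terminal objects
  have HtG : IsTerminal (G.toFunctor.obj (⊤_ C)) :=
    terminalIsTerminal.isTerminalObj G.toFunctor (⊤_ C)
  have HtGG : IsTerminal (G.toFunctor.obj (G.toFunctor.obj (⊤_ C))) :=
    HtG.isTerminalObj G.toFunctor _
  -- the underlying object of the terminal coalgebra is terminal in `C`
  let W : G.Coalgebra :=
    { A := ⊤_ C
      a := HtG.from (⊤_ C)
      counit := terminal.hom_ext _ _
      coassoc := HtGG.hom_ext _ _ }
  let α : (⊤_ (G.Coalgebra)) ⟶ W := { f := terminal.from _, h := HtG.hom_ext _ _ }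
  let β : W ⟶ ⊤_ (G.Coalgebra) := terminal.from W
  have hβα : β ≫ α = 𝟙 W := Comonad.Coalgebra.Hom.ext' _ _ _ _ (terminal.hom_ext _ _)
  have hαβ : α ≫ β = 𝟙 (⊤_ (G.Coalgebra)) := terminal.hom_ext _ _
  have Htt : IsTerminal ((⊤_ (G.Coalgebra)).A) := by
    refine IsTerminal.ofIso terminalIsTerminal
      ⟨β.f, α.f, ?_, ?_⟩
    · have := congrArg Comonad.Coalgebra.Hom.f hβα
      simpa using this
    · have := congrArg Comonad.Coalgebra.Hom.f hαβ
      simpa using this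
  -- basic monomorphisms
  have monoTr : Mono tr := mono_of_terminal_from tr
  have monoTrueG : Mono trueG := mono_of_terminal_from trueG
  have monoM : Mono m := mono_snd_of_isPullback hk monoTr
  have monoMG'c : Mono mG' := mono_snd_of_isPullback hkG monoTrueG
  -- the comparison `w : t ⟶ G ⊤`
  set w : (⊤_ (G.Coalgebra)).A ⟶ G.toFunctor.obj (⊤_ C) :=
    (⊤_ (G.Coalgebra)).a ≫ G.toFunctor.map (terminal.from (⊤_ (G.Coalgebra)).A) with hwdef
  have wIso : IsIso w := ⟨Htt.from _, Htt.hom_ext _ _, HtG.hom_ext _ _⟩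
  -- `trueG.f` is the pullback of `G tr` along `mG`
  have comm_pbT : w ≫ G.toFunctor.map tr = trueG.f ≫ mG := by
    have : G.forget.map trueG = trueG.f := rfl
    rw [hwdef, Category.assoc, ← htrueG, this]
    rfl
  have pbT : IsPullback w trueG.f (G.toFunctor.map tr) mG := by
    refine IsPullback.of_isLimit (PullbackCone.IsLimit.mk comm_pbT
      (fun s => Htt.from s.pt) (fun s => HtG.hom_ext _ _) (fun s => ?_)
      (fun s mm _ _ => Htt.hom_ext _ _))
    have h1 : (Htt.from s.pt ≫ trueG.f) ≫ mG = s.snd ≫ mG := by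
      rw [Category.assoc, ← comm_pbT, ← Category.assoc,
        HtG.hom_ext (Htt.from s.pt ≫ w) s.fst, s.condition]
    exact (cancel_mono mG).mp h1
  -- `trueG.f` is classified by `mG ≫ τ`
  have cls_trueG : IsPullback (terminal.from ((⊤_ (G.Coalgebra)).A)) trueG.f tr (mG ≫ τ) := by
    have h0 := pbT.paste_horiz hτ
    rwa [terminal.hom_ext (w ≫ terminal.from _) (terminal.from _)] at h0
  -- key identity : `mG'.f ≫ mG = BG.a ≫ G (mG'.f ≫ mG ≫ τ)`
  have hmGeq : mG ≫ (G.δ.app Ω ≫ G.toFunctor.map τ) = mG := by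
    rw [← hw, Category.comp_id]
  have keyχ : mG'.f ≫ mG = BG.a ≫ G.toFunctor.map (mG'.f ≫ mG ≫ τ) := by
    calc mG'.f ≫ mG
        = mG'.f ≫ mG ≫ (G.δ.app Ω ≫ G.toFunctor.map τ) := by rw [hmGeq]
      _ = mG'.f ≫ (mG ≫ G.δ.app Ω) ≫ G.toFunctor.map τ := by simp only [Category.assoc]
      _ = mG'.f ≫ (ΩG.a ≫ G.toFunctor.map mG) ≫ G.toFunctor.map τ := by rw [hcoalg]
      _ = (mG'.f ≫ ΩG.a) ≫ G.toFunctor.map mG ≫ G.toFunctor.map τ := by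
          simp only [Category.assoc]
      _ = (BG.a ≫ G.toFunctor.map mG'.f) ≫ G.toFunctor.map mG ≫ G.toFunctor.map τ := by
          rw [← mG'.h]
      _ = BG.a ≫ G.toFunctor.map (mG'.f ≫ mG ≫ τ) := by
          simp only [Functor.map_comp, Category.assoc]
  -- underlying factorization of `trueG`
  have hfacGf : eG.f ≫ jG.f ≫ mG'.f = trueG.f := by
    have := congrArg Comonad.Coalgebra.Hom.f hfacG
    simpa using this
  -- the left half of the cone condition for the dfs lift
  have htrtau : trueG.f ≫ mG ≫ τ = terminal.from _ ≫ tr := by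
    rw [← Category.assoc, ← comm_pbT, Category.assoc, ← hτ.w, ← Category.assoc,
      terminal.hom_ext (w ≫ terminal.from _) (terminal.from _)]
  have cond1 : eG.f ≫ jG.f ≫ (mG'.f ≫ mG ≫ τ) = (terminal.from _ ≫ e) ≫ j ≫ m := by
    calc eG.f ≫ jG.f ≫ (mG'.f ≫ mG ≫ τ)
        = (eG.f ≫ jG.f ≫ mG'.f) ≫ mG ≫ τ := by simp only [Category.assoc]
      _ = trueG.f ≫ mG ≫ τ := by rw [hfacGf]
      _ = terminal.from _ ≫ tr := htrtau
      _ = terminal.from _ ≫ e ≫ j ≫ m := by rw [hfac]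
      _ = (terminal.from _ ≫ e) ≫ j ≫ m := by simp only [Category.assoc]
  obtain ⟨⟨s1, t'⟩, ⟨-, -, ht'⟩, -⟩ :=
    h.lift eG.f jG.f j m (terminal.from _ ≫ e) (mG'.f ≫ mG ≫ τ) heG hjG hj hm cond1
  -- `χ ≫ k = true ∘ !`
  have hχk : (mG'.f ≫ mG ≫ τ) ≫ k = terminal.from BG.A ≫ tr := by
    rw [← ht', Category.assoc, ← hk.w, ← Category.assoc,
      terminal.hom_ext (t' ≫ terminal.from B) (terminal.from _)]
  -- `mG'.f` is a monomorphism in `C`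
  have monoMG'f : Mono mG'.f := by
    have sK := IsPullback.of_hasPullback mG'.f mG'.f
    have sGK := sK.map G.toFunctor
    have hcone : (pullback.fst mG'.f mG'.f ≫ BG.a) ≫ G.toFunctor.map mG'.f
        = (pullback.snd mG'.f mG'.f ≫ BG.a) ≫ G.toFunctor.map mG'.f := by
      rw [Category.assoc, mG'.h, Category.assoc, mG'.h, ← Category.assoc, sK.w,
        Category.assoc]
    set aK := sGK.lift (pullback.fst mG'.f mG'.f ≫ BG.a) (pullback.snd mG'.f mG'.f ≫ BG.a)
      hcone with haK
    have haK1 : aK ≫ G.toFunctor.map (pullback.fst mG'.f mG'.f)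
        = pullback.fst mG'.f mG'.f ≫ BG.a := sGK.lift_fst _ _ _
    have haK2 : aK ≫ G.toFunctor.map (pullback.snd mG'.f mG'.f)
        = pullback.snd mG'.f mG'.f ≫ BG.a := sGK.lift_snd _ _ _
    have sGGK := sGK.map G.toFunctor
    let K' : G.Coalgebra :=
      { A := pullback mG'.f mG'.f
        a := aK
        counit := by
          apply sK.hom_ext
          · have hnat : G.ε.app (pullback mG'.f mG'.f) ≫ pullback.fst mG'.f mG'.f
                = G.toFunctor.map (pullback.fst mG'.f mG'.f) ≫ G.ε.app BG.A := by
              simpa using (G.ε.naturality (pullback.fst mG'.f mG'.f)).symm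
            rw [Category.assoc, hnat, ← Category.assoc, haK1, Category.assoc, BG.counit,
              Category.comp_id, Category.id_comp]
          · have hnat : G.ε.app (pullback mG'.f mG'.f) ≫ pullback.snd mG'.f mG'.f
                = G.toFunctor.map (pullback.snd mG'.f mG'.f) ≫ G.ε.app BG.A := by
              simpa using (G.ε.naturality (pullback.snd mG'.f mG'.f)).symm
            rw [Category.assoc, hnat, ← Category.assoc, haK2, Category.assoc, BG.counit,
              Category.comp_id, Category.id_comp]
        coassoc := by
          apply sGGK.hom_ext
          · have hnat : G.δ.app (pullback mG'.f mG'.f)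
                ≫ G.toFunctor.map (G.toFunctor.map (pullback.fst mG'.f mG'.f))
                = G.toFunctor.map (pullback.fst mG'.f mG'.f) ≫ G.δ.app BG.A := by
              simpa using (G.δ.naturality (pullback.fst mG'.f mG'.f)).symm
            have hL : (aK ≫ G.δ.app _) ≫ G.toFunctor.map (G.toFunctor.map (pullback.fst mG'.f mG'.f))
                = pullback.fst mG'.f mG'.f ≫ BG.a ≫ G.toFunctor.map BG.a := by
              rw [Category.assoc, hnat, ← Category.assoc, haK1, Category.assoc, BG.coassoc]
            have hR : (aK ≫ G.toFunctor.map aK) ≫ G.toFunctor.map (G.toFunctor.map (pullback.fst mG'.f mG'.f))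
                = pullback.fst mG'.f mG'.f ≫ BG.a ≫ G.toFunctor.map BG.a := by
              rw [Category.assoc, ← Functor.map_comp, haK1, Functor.map_comp,
                ← Category.assoc, haK1, Category.assoc]
            rw [hL, hR]
          · have hnat : G.δ.app (pullback mG'.f mG'.f)
                ≫ G.toFunctor.map (G.toFunctor.map (pullback.snd mG'.f mG'.f))
                = G.toFunctor.map (pullback.snd mG'.f mG'.f) ≫ G.δ.app BG.A := by
              simpa using (G.δ.naturality (pullback.snd mG'.f mG'.f)).symm
            have hL : (aK ≫ G.δ.app _) ≫ G.toFunctor.map (G.toFunctor.map (pullback.snd mG'.f mG'.f))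
                = pullback.snd mG'.f mG'.f ≫ BG.a ≫ G.toFunctor.map BG.a := by
              rw [Category.assoc, hnat, ← Category.assoc, haK2, Category.assoc, BG.coassoc]
            have hR : (aK ≫ G.toFunctor.map aK) ≫ G.toFunctor.map (G.toFunctor.map (pullback.snd mG'.f mG'.f))
                = pullback.snd mG'.f mG'.f ≫ BG.a ≫ G.toFunctor.map BG.a := by
              rw [Category.assoc, ← Functor.map_comp, haK2, Functor.map_comp,
                ← Category.assoc, haK2, Category.assoc]
            rw [hL, hR] }
    let κ₁ : K' ⟶ BG := { f := pullback.fst mG'.f mG'.f, h := haK1 }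
    let κ₂ : K' ⟶ BG := { f := pullback.snd mG'.f mG'.f, h := haK2 }
    have hκ : κ₁ ≫ mG' = κ₂ ≫ mG' :=
      Comonad.Coalgebra.Hom.ext' _ _ _ _ (by simpa using sK.w)
    haveI := monoMG'c
    have : κ₁ = κ₂ := (cancel_mono mG').mp hκ
    exact mono_of_kernel_pair sK (congrArg Comonad.Coalgebra.Hom.f this)
  haveI := monoMG'f
  have monoGm : Mono (G.toFunctor.map m) := map_mono_of_preserves G.toFunctor m monoM
  haveI := monoGm
  have monoGcomp : Mono (G.toFunctor.map (mG'.f ≫ mG)) := by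
    haveI : Mono (mG'.f ≫ mG) := mono_comp _ _
    exact map_mono_of_preserves G.toFunctor _ inferInstance
  -- the square `Q`, pullback of `m` along `mG ≫ τ`
  have sQ := IsPullback.of_hasPullback m (mG ≫ τ)
  have condd : (terminal.from _ ≫ e ≫ j) ≫ m = trueG.f ≫ (mG ≫ τ) := by
    rw [Category.assoc, Category.assoc, hfac]
    exact cls_trueG.w
  set d := sQ.lift (terminal.from _ ≫ e ≫ j) trueG.f condd with hddef
  have hd1 : d ≫ pullback.fst m (mG ≫ τ) = terminal.from _ ≫ e ≫ j := sQ.lift_fst _ _ _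
  have hd2 : d ≫ pullback.snd m (mG ≫ τ) = trueG.f := sQ.lift_snd _ _ _
  have bigQ : IsPullback (terminal.from ((⊤_ (G.Coalgebra)).A)) (d ≫ pullback.snd m (mG ≫ τ))
      ((e ≫ j) ≫ m) (mG ≫ τ) := by
    rw [hd2, Category.assoc, hfac]
    exact cls_trueG
  have topQ : IsPullback (terminal.from ((⊤_ (G.Coalgebra)).A)) d (e ≫ j)
      (pullback.fst m (mG ≫ τ)) := by
    refine IsPullback.of_bot bigQ ?_ sQ
    rw [hd1]
  have hdJE : DFS.Comp J E d := hc.2.1 (e ≫ j) _ d _ topQ ⟨A, e, j, he, hj, rfl⟩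
  obtain ⟨Zd, eh, jh, heh, hjh, hdeq⟩ := hdJE
  have cond2 : eh ≫ jh ≫ pullback.snd m (mG ≫ τ) = eG.f ≫ jG.f ≫ mG'.f := by
    rw [hfacGf, ← hd2, ← hdeq, Category.assoc]
  obtain ⟨⟨s2, t₂⟩, ⟨-, -, ht₂⟩, -⟩ :=
    h.lift eh jh jG.f mG'.f eG.f (pullback.snd m (mG ≫ τ)) heh hjh hjG hmG cond2
  -- continuity: `G m` factors through the closure of `G tr`
  have clsTrId : IsPullback (terminal.from (⊤_ C)) tr tr (𝟙 Ω) := by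
    have eq0 : terminal.from (⊤_ C) = 𝟙 (⊤_ C) := terminal.hom_ext _ _
    rw [eq0]
    exact IsPullback.of_horiz_isIso ⟨by rw [Category.id_comp, Category.comp_id]⟩
  have closTr : DFS.IsClosureOf Ω tr k tr m := ⟨𝟙 Ω, clsTrId, by
    show DFS.Classifies Ω tr m (𝟙 Ω ≫ k)
    rwa [Category.id_comp]⟩
  have s₂ := IsPullback.of_hasPullback tr (τ ≫ k)
  have cls₂ : DFS.Classifies Ω tr (pullback.snd tr (τ ≫ k)) (τ ≫ k) := by
    show IsPullback _ _ _ _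
    rw [terminal.hom_ext (terminal.from _) (pullback.fst tr (τ ≫ k))]
    exact s₂
  have closG : DFS.IsClosureOf Ω tr k (G.toFunctor.map tr) (pullback.snd tr (τ ≫ k)) :=
    ⟨τ, hτ, cls₂⟩
  obtain ⟨φ, hφ⟩ := hcont tr m monoTr closTr (pullback.snd tr (τ ≫ k)) closG
  -- `P`, the pullback of `G m` along `mG`
  have sP := IsPullback.of_hasPullback (G.toFunctor.map m) mG
  -- the subobject `Q` is classified by `(mG ≫ τ) ≫ k`
  have clsQ0 : IsPullback (terminal.from (pullback m (mG ≫ τ))) (pullback.snd m (mG ≫ τ)) tr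
      ((mG ≫ τ) ≫ k) := by
    have h0 := sQ.paste_horiz hk
    rwa [terminal.hom_ext (pullback.fst m (mG ≫ τ) ≫ terminal.from B) (terminal.from _)] at h0
  -- the map `ρ : P ⟶ Q`
  have condρ : terminal.from (pullback (G.toFunctor.map m) mG) ≫ tr
      = pullback.snd (G.toFunctor.map m) mG ≫ ((mG ≫ τ) ≫ k) := by
    have : pullback.snd (G.toFunctor.map m) mG ≫ ((mG ≫ τ) ≫ k)
        = pullback.fst (G.toFunctor.map m) mG ≫ G.toFunctor.map m ≫ τ ≫ k := by
      rw [← Category.assoc, ← Category.assoc, ← sP.w]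
      simp only [Category.assoc]
    have h2' : G.toFunctor.map m ≫ τ ≫ k = φ ≫ (terminal.from _ ≫ tr) := by
      rw [← hφ, Category.assoc, ← cls₂.w]
    have h3' : pullback.fst (G.toFunctor.map m) mG ≫ φ ≫ terminal.from (pullback tr (τ ≫ k)) ≫ tr
        = terminal.from (pullback (G.toFunctor.map m) mG) ≫ tr := by
      rw [← Category.assoc, ← Category.assoc,
        terminal.hom_ext ((pullback.fst (G.toFunctor.map m) mG ≫ φ) ≫ terminal.from _)
          (terminal.from _)]
    rw [this, h2']
    exact h3'.symm
  set ρ := clsQ0.lift (terminal.from _) (pullback.snd (G.toFunctor.map m) mG) condρ with hρdef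
  have hρ : ρ ≫ pullback.snd m (mG ≫ τ) = pullback.snd (G.toFunctor.map m) mG :=
    clsQ0.lift_snd _ _ _
  have hμ : (ρ ≫ t₂) ≫ mG'.f = pullback.snd (G.toFunctor.map m) mG := by
    rw [Category.assoc, ht₂, hρ]
  -- the map `ℓ : BG.A ⟶ P`
  have condℓ : (BG.a ≫ G.toFunctor.map t') ≫ G.toFunctor.map m = mG'.f ≫ mG := by
    rw [Category.assoc, ← Functor.map_comp, ht']
    exact keyχ.symm
  set ℓ := sP.lift (BG.a ≫ G.toFunctor.map t') mG'.f condℓ with hℓdef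
  have hℓ : ℓ ≫ pullback.snd (G.toFunctor.map m) mG = mG'.f := sP.lift_snd _ _ _
  -- `G m` is classified by `G k ≫ τ`, hence `snd P` is classified by `mG ≫ G k ≫ τ`
  have Ghk := hk.map G.toFunctor
  have clsGm0 : IsPullback (terminal.from (G.toFunctor.obj B)) (G.toFunctor.map m) tr
      (G.toFunctor.map k ≫ τ) := by
    have h0 := Ghk.paste_horiz hτ
    rwa [terminal.hom_ext (G.toFunctor.map (terminal.from B) ≫ terminal.from _)
      (terminal.from _)] at h0
  have clsP0 : IsPullback (terminal.from (pullback (G.toFunctor.map m) mG))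
      (pullback.snd (G.toFunctor.map m) mG) tr (mG ≫ G.toFunctor.map k ≫ τ) := by
    have h0 := sP.paste_horiz clsGm0
    rwa [terminal.hom_ext (pullback.fst (G.toFunctor.map m) mG ≫ terminal.from _)
      (terminal.from _)] at h0
  -- `mG'.f` is classified by `mG ≫ G k ≫ τ`
  have commβ : mG'.f ≫ mG ≫ G.toFunctor.map k ≫ τ = terminal.from BG.A ≫ tr := by
    calc mG'.f ≫ mG ≫ G.toFunctor.map k ≫ τ
        = (mG'.f ≫ mG) ≫ G.toFunctor.map k ≫ τ := by simp only [Category.assoc]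
      _ = (BG.a ≫ G.toFunctor.map (mG'.f ≫ mG ≫ τ)) ≫ G.toFunctor.map k ≫ τ := by rw [keyχ]
      _ = BG.a ≫ G.toFunctor.map ((mG'.f ≫ mG ≫ τ) ≫ k) ≫ τ := by
          simp only [Functor.map_comp, Category.assoc]
      _ = BG.a ≫ G.toFunctor.map (terminal.from BG.A ≫ tr) ≫ τ := by rw [hχk]
      _ = BG.a ≫ G.toFunctor.map (terminal.from BG.A) ≫ (G.toFunctor.map tr ≫ τ) := by
          simp only [Functor.map_comp, Category.assoc]
      _ = BG.a ≫ G.toFunctor.map (terminal.from BG.A) ≫ (terminal.from _ ≫ tr) := by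
          rw [← hτ.w]
      _ = (BG.a ≫ G.toFunctor.map (terminal.from BG.A) ≫ terminal.from _) ≫ tr := by
          simp only [Category.assoc]
      _ = terminal.from BG.A ≫ tr := by
          rw [terminal.hom_ext (BG.a ≫ G.toFunctor.map (terminal.from BG.A) ≫ terminal.from _)
            (terminal.from _)]
  have clsB : IsPullback (terminal.from BG.A) mG'.f tr (mG ≫ G.toFunctor.map k ≫ τ) := by
    refine IsPullback.of_isLimit (PullbackCone.IsLimit.mk commβ.symm
      (fun s => clsP0.lift s.fst s.snd s.condition ≫ (ρ ≫ t₂))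
      (fun s => terminal.hom_ext _ _) (fun s => ?_) (fun s mm h1 h2 => ?_))
    · rw [Category.assoc, hμ, clsP0.lift_snd]
    · have : mm ≫ mG'.f = (clsP0.lift s.fst s.snd s.condition ≫ (ρ ≫ t₂)) ≫ mG'.f := by
        rw [h2, Category.assoc, hμ, clsP0.lift_snd]
      exact (cancel_mono mG'.f).mp this
  -- assembling the pullback square for `kt` in `C`
  set p : BG.A ⟶ (⊤_ (G.Coalgebra)).A := (terminal.from BG).f with hpdef
  have comm₁ : (p ≫ w) ≫ G.toFunctor.map tr = mG'.f ≫ (mG ≫ G.toFunctor.map k) := by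
    have e1 : mG'.f ≫ (mG ≫ G.toFunctor.map k)
        = (BG.a ≫ G.toFunctor.map (terminal.from BG.A)) ≫ G.toFunctor.map tr := by
      calc mG'.f ≫ (mG ≫ G.toFunctor.map k)
          = (mG'.f ≫ mG) ≫ G.toFunctor.map k := by rw [Category.assoc]
        _ = (BG.a ≫ G.toFunctor.map (mG'.f ≫ mG ≫ τ)) ≫ G.toFunctor.map k := by rw [keyχ]
        _ = BG.a ≫ G.toFunctor.map ((mG'.f ≫ mG ≫ τ) ≫ k) := by
            simp only [Functor.map_comp, Category.assoc]
        _ = BG.a ≫ G.toFunctor.map (terminal.from BG.A ≫ tr) := by rw [hχk]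
        _ = (BG.a ≫ G.toFunctor.map (terminal.from BG.A)) ≫ G.toFunctor.map tr := by
            simp only [Functor.map_comp, Category.assoc]
    rw [e1, HtG.hom_ext (p ≫ w) (BG.a ≫ G.toFunctor.map (terminal.from BG.A))]
  have S'big : IsPullback ((p ≫ w) ≫ terminal.from (G.toFunctor.obj (⊤_ C))) mG'.f tr
      ((mG ≫ G.toFunctor.map k) ≫ τ) := by
    rw [terminal.hom_ext ((p ≫ w) ≫ terminal.from _) (terminal.from _), Category.assoc]
    exact clsB
  have S' : IsPullback (p ≫ w) mG'.f (G.toFunctor.map tr) (mG ≫ G.toFunctor.map k) :=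
    IsPullback.of_right S'big comm₁ hτ
  have topsq : IsPullback p (𝟙 BG.A) w (p ≫ w) := by
    haveI := wIso
    exact IsPullback.of_vert_isIso ⟨by rw [Category.id_comp]⟩
  have SqC0 : IsPullback p (𝟙 BG.A ≫ mG'.f) (w ≫ G.toFunctor.map tr)
      (mG ≫ G.toFunctor.map k) := topsq.paste_vert S'
  rw [Category.id_comp] at SqC0
  have hktf : kt.f ≫ mG = mG ≫ G.toFunctor.map k := hkt
  have SqC1 : IsPullback p mG'.f (trueG.f ≫ mG) (kt.f ≫ mG) := by
    rw [hktf, ← comm_pbT]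
    exact SqC0
  have commS : p ≫ trueG.f = mG'.f ≫ kt.f := by
    have h1 : (p ≫ trueG.f) ≫ mG = (mG'.f ≫ kt.f) ≫ mG := by
      rw [Category.assoc, Category.assoc]
      exact SqC1.w
    exact (cancel_mono mG).mp h1
  have SqC : IsPullback p mG'.f trueG.f kt.f := by
    refine IsPullback.of_bot ?_ commS (pb_id_of_mono kt.f mG monoMG)
    rw [Category.comp_id]
    exact SqC1
  -- reflecting the square to the category of coalgebras
  have commCG : terminal.from BG ≫ trueG = mG' ≫ kt :=
    Comonad.Coalgebra.Hom.ext' _ _ _ _ (by simpa using SqC.w)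
  have SqCG : IsPullback (terminal.from BG) mG' trueG kt := by
    refine IsPullback.of_isLimit (PullbackCone.IsLimit.mk commCG (fun s => ?_)
      (fun s => terminal.hom_ext _ _) (fun s => ?_) (fun s mm h1 h2 => ?_)
      )
    · -- the lift
      have condz : s.fst.f ≫ trueG.f = s.snd.f ≫ kt.f := by
        have := congrArg Comonad.Coalgebra.Hom.f s.condition
        simpa using this
      refine { f := SqC.lift s.fst.f s.snd.f condz, h := ?_ }
      -- coalgebra morphism property, checked after composing with the mono `G (mG'.f ≫ mG)`
      set z₀ := SqC.lift s.fst.f s.snd.f condz with hz₀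
      have hz2 : z₀ ≫ mG'.f = s.snd.f := SqC.lift_snd _ _ _
      have hcalc : (s.pt.a ≫ G.toFunctor.map z₀) ≫ G.toFunctor.map (mG'.f ≫ mG)
          = (z₀ ≫ BG.a) ≫ G.toFunctor.map (mG'.f ≫ mG) := by
        calc (s.pt.a ≫ G.toFunctor.map z₀) ≫ G.toFunctor.map (mG'.f ≫ mG)
            = s.pt.a ≫ G.toFunctor.map (z₀ ≫ mG'.f) ≫ G.toFunctor.map mG := by
              simp only [Functor.map_comp, Category.assoc]
          _ = s.pt.a ≫ G.toFunctor.map s.snd.f ≫ G.toFunctor.map mG := by rw [hz2]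
          _ = (s.pt.a ≫ G.toFunctor.map s.snd.f) ≫ G.toFunctor.map mG := by
              rw [Category.assoc]
          _ = (s.snd.f ≫ ΩG.a) ≫ G.toFunctor.map mG := by rw [s.snd.h]
          _ = s.snd.f ≫ (ΩG.a ≫ G.toFunctor.map mG) := by rw [Category.assoc]
          _ = s.snd.f ≫ mG ≫ G.δ.app Ω := by rw [hcoalg]
          _ = (z₀ ≫ mG'.f) ≫ mG ≫ G.δ.app Ω := by rw [hz2]
          _ = z₀ ≫ mG'.f ≫ (ΩG.a ≫ G.toFunctor.map mG) := by
              rw [hcoalg]; simp only [Category.assoc]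
          _ = z₀ ≫ (mG'.f ≫ ΩG.a) ≫ G.toFunctor.map mG := by simp only [Category.assoc]
          _ = z₀ ≫ (BG.a ≫ G.toFunctor.map mG'.f) ≫ G.toFunctor.map mG := by rw [← mG'.h]
          _ = (z₀ ≫ BG.a) ≫ G.toFunctor.map (mG'.f ≫ mG) := by
              simp only [Functor.map_comp, Category.assoc]
      exact (cancel_mono (G.toFunctor.map (mG'.f ≫ mG))).mp hcalc
    · -- the lift composed with `mG'` is the second leg
      apply Comonad.Coalgebra.Hom.ext' _ _ _ _
      simpa using SqC.lift_snd _ _ _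
    · -- uniqueness
      apply Comonad.Coalgebra.Hom.ext' _ _ _ _
      show mm.f = _
      apply SqC.hom_ext
      · have h1' : mm ≫ terminal.from BG = s.fst := terminal.hom_ext _ _
        have := congrArg Comonad.Coalgebra.Hom.f h1'
        simp only [Comonad.Coalgebra.comp_f] at this
        rw [this]
        exact (SqC.lift_fst _ _ _).symm
      · have := congrArg Comonad.Coalgebra.Hom.f h2
        simp only [Comonad.Coalgebra.comp_f] at this
        rw [this]
        exact (SqC.lift_snd _ _ _).symm
  exact (hclG mG' monoMG'c).unique hkG SqCG
end

section
/- Let G be a compact topological group, regarded as a uniform space with its unique compatible uniformity U_G (which is totally bounded and complete). Consider the monad H^u = (H^u, η^u, μ^u) on the category Unif of uniform spaces, where H^u(X, U) = (G, U_G) × (X, U) and H^u(f) = 1_G × f, the unit is η^u_X(x) = (e, x) and the multiplication is μ^u_X(g1, (g2, x)) = (g1·g2, x). Then the Eilenberg–Moore category Unif^{H^u} of H^u-algebras (uniform spaces with a uniformly continuous action of G, and uniformly continuous equivariant maps) has all small colimits, i.e. it is cocomplete. -/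
open CategoryTheory CategoryTheory.Limits

universe u

namespace DFS

variable (G : Type u) [Group G] [UniformSpace G] [IsUniformGroup G] [CompactSpace G]

/-- The monad `X ↦ (G, 𝒰_G) × X` on the category of uniform spaces determined by a
compact group `G` with its (unique compatible, totally bounded and complete)
uniformity: the unit is `x ↦ (1, x)` and the multiplication is
`(g₁, (g₂, x)) ↦ (g₁ · g₂, x)`. -/
def huMonad : Monad UniformSpaceCat.{u} where
  obj X := UniformSpaceCat.of (G × X)
  map {X Y} f := ⟨Prod.map id f.hom.1, uniformContinuous_id.prodMap f.hom.2⟩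
  map_id X := UniformSpaceCat.hom_ext rfl
  map_comp f g := UniformSpaceCat.hom_ext rfl
  η :=
    { app := fun X => ⟨fun x => ((1 : G), x),
        uniformContinuous_const.prodMk uniformContinuous_id⟩
      naturality := fun X Y f => UniformSpaceCat.hom_ext rfl }
  μ :=
    { app := fun X => ⟨fun p => (p.1 * p.2.1, p.2.2),
        (uniformContinuous_mul.comp
          (uniformContinuous_fst.prodMk
            (uniformContinuous_fst.comp uniformContinuous_snd))).prodMk
          (uniformContinuous_snd.comp uniformContinuous_snd)⟩
      naturality := fun X Y f => UniformSpaceCat.hom_ext rfl }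
  assoc X := UniformSpaceCat.hom_ext (funext fun p => by
    show (_, _) = (_, _)
    dsimp
    first
    | exact Prod.ext (mul_assoc _ _ _) rfl
    | exact Prod.ext (mul_assoc _ _ _).symm rfl)
  left_unit X := UniformSpaceCat.hom_ext (funext fun p => by
    show (_, _) = p
    dsimp
    rw [one_mul]
    exact rfl)
  right_unit X := UniformSpaceCat.hom_ext (funext fun p => by
    show (_, _) = p
    dsimp
    exact Prod.ext (mul_one _) rfl)

end DFS

namespace DFSAux
set_option linter.unusedSectionVars false

open Uniformity

variable {G : Type u} [Group G] [UniformSpace G] [IsUniformGroup G] [CompactSpace G]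
variable {J : Type u} [Category.{u} J]

/-- Pointwise form of the algebra-morphism condition. -/
theorem hom_apply {A B : (DFS.huMonad G).Algebra} (f : A ⟶ B) (g : G) (x : A.A) :
    B.a.hom.1 (g, f.f.hom.1 x) = f.f.hom.1 (A.a.hom.1 (g, x)) :=
  congrFun (congrArg (fun h => h.hom.1) f.h) (g, x)

/-- Pointwise form of the algebra unit law. -/
theorem unit_apply (A : (DFS.huMonad G).Algebra) (x : A.A) :
    A.a.hom.1 ((1 : G), x) = x :=
  congrFun (congrArg (fun h => h.hom.1) A.unit) x

/-- Pointwise form of the algebra associativity law. -/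
theorem assoc_apply (A : (DFS.huMonad G).Algebra) (g₁ g₂ : G) (x : A.A) :
    A.a.hom.1 (g₁, A.a.hom.1 (g₂, x)) = A.a.hom.1 (g₁ * g₂, x) :=
  (congrFun (congrArg (fun h => h.hom.1) A.assoc) (g₁, (g₂, x))).symm

variable (D : J ⥤ (DFS.huMonad G).Algebra)

/-- The underlying `Type`-valued diagram. -/
abbrev Fs : J ⥤ Type u := D ⋙ ((DFS.huMonad G).forget ⋙ forget UniformSpaceCat)

/-- The underlying set of the colimit. -/
noncomputable def Y : Type u := colimit (Fs D)

/-- The canonical maps into the colimit set. -/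
noncomputable def ιY (j : J) : (D.obj j).A → Y D := colimit.ι (Fs D) j

/-- The cocone defining the action of `g : G` on the colimit set. -/
noncomputable def actCocone (g : G) : Cocone (Fs D) where
  pt := Y D
  ι :=
    { app := fun j => TypeCat.ofHom fun x => ιY D j ((D.obj j).a.hom.1 (g, x))
      naturality := fun j j' f => by
        ext x
        show ιY D j' ((D.obj j').a.hom.1 (g, (D.map f).f.hom.1 x)) = ιY D j ((D.obj j).a.hom.1 (g, x))
        rw [hom_apply (D.map f) g x]
        exact ConcreteCategory.congr_hom (colimit.w (Fs D) f) ((D.obj j).a.hom.1 (g, x)) }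

/-- The action of `g : G` on the colimit set. -/
noncomputable def act (g : G) : Y D → Y D := colimit.desc (Fs D) (actCocone D g)

theorem act_ι (g : G) (j : J) (x : (D.obj j).A) :
    act D g (ιY D j x) = ιY D j ((D.obj j).a.hom.1 (g, x)) :=
  ConcreteCategory.congr_hom (colimit.ι_desc (actCocone D g) j) x

theorem act_one (y : Y D) : act D (1 : G) y = y := by
  obtain ⟨j, x, rfl⟩ := Types.jointly_surjective' (F := Fs D) y
  show act D 1 (ιY D j x) = ιY D j x
  rw [act_ι D 1 j x, unit_apply (D.obj j) x]

theorem act_mul (g₁ g₂ : G) (y : Y D) :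
    act D g₁ (act D g₂ y) = act D (g₁ * g₂) y := by
  obtain ⟨j, x, rfl⟩ := Types.jointly_surjective' (F := Fs D) y
  show act D g₁ (act D g₂ (ιY D j x)) = act D (g₁ * g₂) (ιY D j x)
  rw [act_ι D g₂ j x, act_ι, act_ι D (g₁ * g₂) j x, assoc_apply (D.obj j) g₁ g₂ x]

/-- The (uncurried) action on the colimit set. -/
noncomputable def α : G × Y D → Y D := fun p => act D p.1 p.2

/-- The set of "admissible" uniformities on the colimit set: those making all the
cocone maps and the action uniformly continuous. -/
def S : Set (UniformSpace (Y D)) :=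
  {u | (∀ j : J, UniformContinuous[(D.obj j).A.str, u] (ιY D j)) ∧
    UniformContinuous[@instUniformSpaceProd G (Y D) _ u, u] (α D)}

/-- The finest admissible uniformity on the colimit set. -/
noncomputable def uY : UniformSpace (Y D) := sInf (S D)

theorem uY_ι (j : J) : UniformContinuous[(D.obj j).A.str, uY D] (ιY D j) :=
  uniformContinuous_sInf_rng.2 fun _ hu => hu.1 j

theorem uY_α : UniformContinuous[@instUniformSpaceProd G (Y D) _ (uY D), uY D] (α D) := by
  refine uniformContinuous_sInf_rng.2 fun u hu => ?_
  have hid : UniformContinuous[uY D, u] id :=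
    uniformContinuous_sInf_dom hu uniformContinuous_id
  have hpm : UniformContinuous[@instUniformSpaceProd G (Y D) _ (uY D),
      @instUniformSpaceProd G (Y D) _ u] (Prod.map id id) :=
    @UniformContinuous.prodMap G (Y D) G (Y D) _ (uY D) _ u id id
      uniformContinuous_id hid
  exact @UniformContinuous.comp (G × Y D) (G × Y D) (Y D)
    (@instUniformSpaceProd G (Y D) _ (uY D)) (@instUniformSpaceProd G (Y D) _ u) u
    (α D) (Prod.map id id) hu.2 hpm

/-- The colimit algebra. -/
noncomputable def pt : (DFS.huMonad G).Algebra where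
  A := @UniformSpaceCat.of (Y D) (uY D)
  a := ⟨α D, uY_α D⟩
  unit := UniformSpaceCat.hom_ext (funext fun y => act_one D y)
  assoc := UniformSpaceCat.hom_ext (funext fun p => (act_mul D p.1 p.2.1 p.2.2).symm)

/-- The colimit cocone. -/
noncomputable def coc : Cocone D where
  pt := pt D
  ι :=
    { app := fun j =>
        { f := ⟨ιY D j, uY_ι D j⟩
          h := UniformSpaceCat.hom_ext (funext fun p => act_ι D p.1 j p.2) }
      naturality := fun j j' f => by
        apply Monad.Algebra.Hom.ext
        apply UniformSpaceCat.hom_ext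
        funext x
        show ιY D j' ((D.map f).f.hom.1 x) = ιY D j x
        exact ConcreteCategory.congr_hom (colimit.w (Fs D) f) x }

section Desc

variable (s : Cocone D)

/-- The cocone on underlying sets induced by a cocone in the algebra category. -/
noncomputable def sSet : Cocone (Fs D) :=
  ((DFS.huMonad G).forget ⋙ forget UniformSpaceCat).mapCocone s

/-- The underlying function of the descent morphism. -/
noncomputable def fdesc : Y D → s.pt.A := colimit.desc (Fs D) (sSet D s)

theorem fdesc_ι (j : J) (x : (D.obj j).A) :
    fdesc D s (ιY D j x) = (s.ι.app j).f.hom.1 x :=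
  ConcreteCategory.congr_hom (colimit.ι_desc (sSet D s) j) x

theorem fdesc_act (g : G) (y : Y D) :
    fdesc D s (act D g y) = s.pt.a.hom.1 (g, fdesc D s y) := by
  obtain ⟨j, x, rfl⟩ := Types.jointly_surjective' (F := Fs D) y
  show fdesc D s (act D g (ιY D j x)) = s.pt.a.hom.1 (g, fdesc D s (ιY D j x))
  rw [act_ι D g j x, fdesc_ι, fdesc_ι D s j x]
  exact (hom_apply (s.ι.app j) g x).symm

theorem comap_mem : UniformSpace.comap (fdesc D s) s.pt.A.str ∈ S D := by
  constructor
  · intro j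
    apply uniformContinuous_comap' (u := (D.obj j).A.str)
    have : fdesc D s ∘ ιY D j = (s.ι.app j).f.hom.1 := funext fun x => fdesc_ι D s j x
    rw [this]
    exact (s.ι.app j).f.hom.2
  · apply uniformContinuous_comap'
      (u := @instUniformSpaceProd G (Y D) _ (UniformSpace.comap (fdesc D s) s.pt.A.str))
    have h1 : fdesc D s ∘ α D =
        fun p : G × Y D => s.pt.a.hom.1 (p.1, fdesc D s p.2) :=
      funext fun p => fdesc_act D s p.1 p.2
    rw [h1]
    have hpm : UniformContinuous[@instUniformSpaceProd G (Y D) _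
        (UniformSpace.comap (fdesc D s) s.pt.A.str),
        @instUniformSpaceProd G (s.pt.A : Type u) _ s.pt.A.str]
        (Prod.map id (fdesc D s)) :=
      @UniformContinuous.prodMap G (Y D) G (s.pt.A : Type u) _
        (UniformSpace.comap (fdesc D s) s.pt.A.str) _ s.pt.A.str id (fdesc D s)
        uniformContinuous_id uniformContinuous_comap
    exact @UniformContinuous.comp (G × Y D) (G × (s.pt.A : Type u)) (s.pt.A : Type u)
      (@instUniformSpaceProd G (Y D) _ (UniformSpace.comap (fdesc D s) s.pt.A.str))
      (@instUniformSpaceProd G (s.pt.A : Type u) _ s.pt.A.str) s.pt.A.str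
      s.pt.a.hom.1 (Prod.map id (fdesc D s)) s.pt.a.hom.2 hpm

theorem fdesc_uc : UniformContinuous[uY D, s.pt.A.str] (fdesc D s) :=
  uniformContinuous_sInf_dom (comap_mem D s) uniformContinuous_comap

end Desc

/-- The cocone `coc D` is a colimit cocone. -/
noncomputable def isColim : IsColimit (coc D) where
  desc s :=
    { f := ⟨fdesc D s, fdesc_uc D s⟩
      h := UniformSpaceCat.hom_ext (funext fun p => (fdesc_act D s p.1 p.2).symm) }
  fac s j := by
    apply Monad.Algebra.Hom.ext
    apply UniformSpaceCat.hom_ext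
    funext x
    exact fdesc_ι D s j x
  uniq s m hm := by
    apply Monad.Algebra.Hom.ext
    apply UniformSpaceCat.hom_ext
    funext y
    obtain ⟨j, x, rfl⟩ := Types.jointly_surjective' (F := Fs D) y
    have h1 : m.f.hom.1 (ιY D j x) = (s.ι.app j).f.hom.1 x :=
      congrFun (congrArg (fun h => h.f.hom.1) (hm j)) x
    show m.f.hom.1 (ιY D j x) = fdesc D s (ιY D j x)
    rw [h1, fdesc_ι D s j x]

end DFSAux

/-- For a compact topological group `G` with its unique compatible
uniformity, the Eilenberg–Moore category of algebras for the monad `X ↦ G × X` on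
`Unif` (uniform spaces with a uniformly continuous `G`-action and uniformly
continuous equivariant maps) is cocomplete. -/
theorem statement19 (G : Type u) [Group G] [UniformSpace G] [IsUniformGroup G]
    [CompactSpace G] : HasColimits (DFS.huMonad G).Algebra := by
  refine ⟨fun {J} 𝒥 => ⟨fun D => HasColimit.mk ⟨DFSAux.coc D, DFSAux.isColim D⟩⟩⟩
end
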